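/- arXiv:2411.05975 — 4 statements merged into one kernel-verified Lean document; each statement's English description precedes it below -/
import Mathlib

section
/- Let {v_t} be i.i.d. real random variables with E[v_t] = 0, E[v_t²] = 1 and |v_t| ≤ v̄ for a constant v̄, let a > 1 and p_n = ⌊(log n)^a⌋, and set ψ_t(n) = (v_t, v_{t−1}, …, v_{t−p_n})ᵀ. Then for each η with 1/2 < η < 1, almost surely there exist a constant c > 0 and an integer N ≥ 1 such that for every n ≥ N, λ_min{∑_{t=n−⌊n^η⌋}^{n} ψ_t(n) ψ_t(n)ᵀ} ≥ c n^η. -/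
open MeasureTheory ProbabilityTheory

section Helpers

open Real Filter

lemma exp_le_cosh_add {c x : ℝ} (hc : 0 < c) (hxc : |x| ≤ c) (r : ℝ) :
    Real.exp (r * x) ≤ Real.cosh (r * c) + (Real.sinh (r * c) / c) * x := by
  have h1 : (0:ℝ) ≤ (c - x) / (2 * c) := by
    apply div_nonneg _ (by linarith)
    have := abs_le.1 hxc
    linarith [this.2]
  have h2 : (0:ℝ) ≤ (c + x) / (2 * c) := by
    apply div_nonneg _ (by linarith)
    have := abs_le.1 hxc
    linarith [this.1]
  have h3 : (c - x) / (2 * c) + (c + x) / (2 * c) = 1 := by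
    field_simp
    ring
  have key := convexOn_exp.2 (Set.mem_univ (-(r * c))) (Set.mem_univ (r * c)) h1 h2 h3
  simp only [smul_eq_mul] at key
  have harg : (c - x) / (2 * c) * (-(r * c)) + (c + x) / (2 * c) * (r * c) = r * x := by
    field_simp
    ring
  rw [harg] at key
  refine key.trans_eq ?_
  rw [Real.cosh_eq, Real.sinh_eq]
  field_simp
  ring

variable {Ω : Type*} [MeasurableSpace Ω] {μ : Measure Ω} [IsProbabilityMeasure μ]

lemma integrable_of_abs_le {X : Ω → ℝ} (hX : Measurable X) {c : ℝ}
    (hb : ∀ ω, |X ω| ≤ c) : Integrable X μ := by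
  refine Integrable.mono' (integrable_const c) hX.aestronglyMeasurable ?_
  exact Filter.Eventually.of_forall fun ω => by simpa [Real.norm_eq_abs] using hb ω

lemma mgf_le_exp_half {X : Ω → ℝ} (hX : Measurable X) {c : ℝ} (hc : 0 < c)
    (hb : ∀ ω, |X ω| ≤ c) (hmean : ∫ ω, X ω ∂μ = 0) (r : ℝ) :
    mgf X μ r ≤ Real.exp (r ^ 2 * c ^ 2 / 2) := by
  have hintX : Integrable X μ := integrable_of_abs_le hX hb
  have hptw : ∀ ω, Real.exp (r * X ω) ≤
      Real.cosh (r * c) + (Real.sinh (r * c) / c) * X ω :=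
    fun ω => exp_le_cosh_add hc (hb ω) r
  have hintexp : Integrable (fun ω => Real.exp (r * X ω)) μ := by
    refine integrable_of_abs_le ((hX.const_mul r).exp) (c := Real.exp (|r| * c)) ?_
    intro ω
    rw [abs_of_pos (Real.exp_pos _)]
    apply Real.exp_le_exp.2
    calc r * X ω ≤ |r * X ω| := le_abs_self _
      _ = |r| * |X ω| := abs_mul _ _
      _ ≤ |r| * c := mul_le_mul_of_nonneg_left (hb ω) (abs_nonneg r)
  have hintRHS : Integrable (fun ω => Real.cosh (r * c) + (Real.sinh (r * c) / c) * X ω) μ :=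
    (integrable_const _).add (hintX.const_mul _)
  have h1 : mgf X μ r ≤ ∫ ω, (Real.cosh (r * c) + (Real.sinh (r * c) / c) * X ω) ∂μ :=
    integral_mono hintexp hintRHS hptw
  refine h1.trans ?_
  have h2 : ∫ ω, (Real.cosh (r * c) + (Real.sinh (r * c) / c) * X ω) ∂μ
      = Real.cosh (r * c) := by
    rw [integral_add (integrable_const _) (hintX.const_mul _), integral_const_mul, hmean]
    simp [measure_univ]
  rw [h2]
  calc Real.cosh (r * c) ≤ Real.exp ((r * c) ^ 2 / 2) := Real.cosh_le_exp_half_sq _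
    _ = Real.exp (r ^ 2 * c ^ 2 / 2) := by rw [mul_pow]

lemma mgf_sum_le_exp {κ : Type*} [DecidableEq κ] {X : κ → Ω → ℝ} {c : ℝ} (hc : 0 < c) (r : ℝ)
    (T : Finset κ) (hmeas : ∀ t ∈ T, Measurable (X t)) (hbdd : ∀ t ∈ T, ∀ ω, |X t ω| ≤ c)
    (hmean : ∀ t ∈ T, ∫ ω, X t ω ∂μ = 0)
    (hind : ∀ a ∈ T, ∀ S ⊆ T, a ∉ S → IndepFun (X a) (fun ω => ∑ t ∈ S, X t ω) μ) :
    mgf (fun ω => ∑ t ∈ T, X t ω) μ r ≤ Real.exp (T.card * (r ^ 2 * c ^ 2 / 2)) := by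
  induction T using Finset.induction_on with
  | empty =>
      simp [mgf, measure_univ]
  | insert a s ha ih =>
      have hmem : ∀ t ∈ s, t ∈ insert a s := fun t ht => Finset.mem_insert_of_mem ht
      have hfun : (fun ω => ∑ t ∈ insert a s, X t ω)
          = X a + fun ω => ∑ t ∈ s, X t ω := by
        funext ω; simp [Finset.sum_insert ha]
      have hindep : IndepFun (X a) (fun ω => ∑ t ∈ s, X t ω) μ :=
        hind a (Finset.mem_insert_self a s) s (Finset.subset_insert a s) ha
      have hmeas_sum : AEStronglyMeasurable (fun ω => ∑ t ∈ s, X t ω) μ :=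
        (Finset.measurable_sum s fun t ht => hmeas t (hmem t ht)).aestronglyMeasurable
      rw [hfun, hindep.mgf_add' (hmeas a (Finset.mem_insert_self a s)).aestronglyMeasurable
        hmeas_sum]
      have h1 : mgf (X a) μ r ≤ Real.exp (r ^ 2 * c ^ 2 / 2) :=
        mgf_le_exp_half (hmeas a (Finset.mem_insert_self a s)) hc
          (hbdd a (Finset.mem_insert_self a s)) (hmean a (Finset.mem_insert_self a s)) r
      have h2 : mgf (fun ω => ∑ t ∈ s, X t ω) μ r ≤ Real.exp (s.card * (r ^ 2 * c ^ 2 / 2)) :=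
        ih (fun t ht => hmeas t (hmem t ht)) (fun t ht => hbdd t (hmem t ht))
          (fun t ht => hmean t (hmem t ht))
          (fun b hb S hS hbS => hind b (hmem b hb) S (hS.trans (Finset.subset_insert a s)) hbS)
      calc mgf (X a) μ r * mgf (fun ω => ∑ t ∈ s, X t ω) μ r
          ≤ Real.exp (r ^ 2 * c ^ 2 / 2) * Real.exp (s.card * (r ^ 2 * c ^ 2 / 2)) :=
            mul_le_mul h1 h2 mgf_nonneg (Real.exp_pos _).le
        _ = Real.exp ((insert a s).card * (r ^ 2 * c ^ 2 / 2)) := by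
            rw [← Real.exp_add, Finset.card_insert_of_notMem ha]
            push_cast
            ring_nf

lemma hoeff_tail {κ : Type*} [DecidableEq κ] {X : κ → Ω → ℝ} {c : ℝ} (hc : 0 < c)
    (T : Finset κ) (hmeas : ∀ t ∈ T, Measurable (X t)) (hbdd : ∀ t ∈ T, ∀ ω, |X t ω| ≤ c)
    (hmean : ∀ t ∈ T, ∫ ω, X t ω ∂μ = 0)
    (hind : ∀ a ∈ T, ∀ S ⊆ T, a ∉ S → IndepFun (X a) (fun ω => ∑ t ∈ S, X t ω) μ)
    {K : ℕ} (hK : T.card ≤ K) (hK0 : 0 < K) {ε : ℝ} (hε : 0 < ε) :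
    μ {ω | ε ≤ ∑ t ∈ T, X t ω} ≤ ENNReal.ofReal (Real.exp (-ε ^ 2 / (2 * K * c ^ 2))) := by
  set r : ℝ := ε / (K * c ^ 2) with hr_def
  have hr : 0 < r := div_pos hε (by positivity)
  have hmeas_sum : Measurable (fun ω => ∑ t ∈ T, X t ω) :=
    Finset.measurable_sum T fun t ht => hmeas t ht
  have hbdd_sum : ∀ ω, |∑ t ∈ T, X t ω| ≤ (T.card : ℝ) * c := by
    intro ω
    calc |∑ t ∈ T, X t ω| ≤ ∑ t ∈ T, |X t ω| := Finset.abs_sum_le_sum_abs _ _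
      _ ≤ ∑ _t ∈ T, c := Finset.sum_le_sum fun t ht => hbdd t ht ω
      _ = (T.card : ℝ) * c := by simp [mul_comm]
  have hint : Integrable (fun ω => Real.exp (r * ∑ t ∈ T, X t ω)) μ := by
    refine integrable_of_abs_le ((hmeas_sum.const_mul r).exp)
      (c := Real.exp (r * ((T.card : ℝ) * c))) ?_
    intro ω
    rw [abs_of_pos (Real.exp_pos _)]
    apply Real.exp_le_exp.2
    exact mul_le_mul_of_nonneg_left ((le_abs_self _).trans (hbdd_sum ω)) hr.le
  have hchern := measure_ge_le_exp_mul_mgf (μ := μ) (X := fun ω => ∑ t ∈ T, X t ω) ε hr.le hint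
  have hmgf : mgf (fun ω => ∑ t ∈ T, X t ω) μ r ≤ Real.exp (K * (r ^ 2 * c ^ 2 / 2)) := by
    refine (mgf_sum_le_exp hc r T hmeas hbdd hmean hind).trans ?_
    apply Real.exp_le_exp.2
    have : (0:ℝ) ≤ r ^ 2 * c ^ 2 / 2 := by positivity
    exact mul_le_mul_of_nonneg_right (by exact_mod_cast hK) this
  have hcomb : Real.exp (-r * ε) * mgf (fun ω => ∑ t ∈ T, X t ω) μ r
      ≤ Real.exp (-ε ^ 2 / (2 * K * c ^ 2)) := by
    calc Real.exp (-r * ε) * mgf (fun ω => ∑ t ∈ T, X t ω) μ r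
        ≤ Real.exp (-r * ε) * Real.exp (K * (r ^ 2 * c ^ 2 / 2)) :=
          mul_le_mul_of_nonneg_left hmgf (Real.exp_pos _).le
      _ = Real.exp (-r * ε + K * (r ^ 2 * c ^ 2 / 2)) := (Real.exp_add _ _).symm
      _ = Real.exp (-ε ^ 2 / (2 * K * c ^ 2)) := by
          congr 1
          rw [hr_def]
          have hKne : (K : ℝ) ≠ 0 := Nat.cast_ne_zero.2 hK0.ne'
          field_simp
          ring
  have hfin : μ {ω | ε ≤ ∑ t ∈ T, X t ω} ≠ ⊤ := measure_ne_top _ _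
  rw [← ENNReal.ofReal_toReal hfin]
  exact ENNReal.ofReal_le_ofReal (hchern.trans hcomb)

lemma hoeff_tail_abs {κ : Type*} [DecidableEq κ] {X : κ → Ω → ℝ} {c : ℝ} (hc : 0 < c)
    (T : Finset κ) (hmeas : ∀ t ∈ T, Measurable (X t)) (hbdd : ∀ t ∈ T, ∀ ω, |X t ω| ≤ c)
    (hmean : ∀ t ∈ T, ∫ ω, X t ω ∂μ = 0)
    (hind : ∀ a ∈ T, ∀ S ⊆ T, a ∉ S → IndepFun (X a) (fun ω => ∑ t ∈ S, X t ω) μ)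
    {K : ℕ} (hK : T.card ≤ K) (hK0 : 0 < K) {ε : ℝ} (hε : 0 < ε) :
    μ {ω | ε ≤ |∑ t ∈ T, X t ω|}
      ≤ 2 * ENNReal.ofReal (Real.exp (-ε ^ 2 / (2 * K * c ^ 2))) := by
  have hsub : {ω | ε ≤ |∑ t ∈ T, X t ω|}
      ⊆ {ω | ε ≤ ∑ t ∈ T, X t ω} ∪ {ω | ε ≤ ∑ t ∈ T, (-X) t ω} := by
    intro ω hω
    simp only [Set.mem_setOf_eq] at hω
    rcases le_abs.1 hω with h | h
    · exact Or.inl h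
    · refine Or.inr ?_
      simp only [Set.mem_setOf_eq, Pi.neg_apply, Finset.sum_neg_distrib]
      exact h
  have hneg : μ {ω | ε ≤ ∑ t ∈ T, (-X) t ω}
      ≤ ENNReal.ofReal (Real.exp (-ε ^ 2 / (2 * K * c ^ 2))) := by
    refine hoeff_tail hc T (fun t ht => (hmeas t ht).neg)
      (fun t ht ω => by simpa using hbdd t ht ω)
      (fun t ht => by simp [integral_neg, hmean t ht]) ?_ hK hK0 hε
    intro a ha S hS haS
    have h := (hind a ha S hS haS).neg_left.neg_right
    have heq : (fun ω => ∑ t ∈ S, (-X) t ω) = -(fun ω => ∑ t ∈ S, X t ω) := by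
      funext ω; simp
    show IndepFun ((-X) a) (fun ω => ∑ t ∈ S, (-X) t ω) μ
    rw [heq]
    exact h
  have hpos := hoeff_tail hc T hmeas hbdd hmean hind hK hK0 hε
  calc μ {ω | ε ≤ |∑ t ∈ T, X t ω|}
      ≤ μ ({ω | ε ≤ ∑ t ∈ T, X t ω} ∪ {ω | ε ≤ ∑ t ∈ T, (-X) t ω}) := measure_mono hsub
    _ ≤ μ {ω | ε ≤ ∑ t ∈ T, X t ω} + μ {ω | ε ≤ ∑ t ∈ T, (-X) t ω} := measure_union_le _ _
    _ ≤ ENNReal.ofReal (Real.exp (-ε ^ 2 / (2 * K * c ^ 2)))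
        + ENNReal.ofReal (Real.exp (-ε ^ 2 / (2 * K * c ^ 2))) := add_le_add hpos hneg
    _ = 2 * ENNReal.ofReal (Real.exp (-ε ^ 2 / (2 * K * c ^ 2))) := (two_mul _).symm

/-- The centered product process. -/
noncomputable def Xf (v : ℤ → Ω → ℝ) (i j : ℕ) (t : ℕ) (ω : Ω) : ℝ :=
  v ((t : ℤ) - (i : ℕ)) ω * v ((t : ℤ) - (j : ℕ)) ω - (if i = j then 1 else 0)

noncomputable def Bblk (i j : ℕ) (t : ℕ) : Finset ℤ :=
  {(t : ℤ) - (i : ℤ), (t : ℤ) - (j : ℤ)}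

lemma mem_Bblk_left (i j t : ℕ) : (t : ℤ) - (i : ℤ) ∈ Bblk i j t := by
  simp [Bblk]

lemma mem_Bblk_right (i j t : ℕ) : (t : ℤ) - (j : ℤ) ∈ Bblk i j t := by
  simp [Bblk]

lemma Xf_indep (v : ℤ → Ω → ℝ) (hv_meas : ∀ t, Measurable (v t))
    (hv_indep : iIndepFun v μ) (i j q : ℕ)
    (hi : i < q) (hj : j < q) (S : Finset ℕ) (a : ℕ)
    (hsep : ∀ t ∈ S, ((q:ℤ) ≤ (t:ℤ) - (a:ℤ) ∨ (q:ℤ) ≤ (a:ℤ) - (t:ℤ))) :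
    IndepFun (Xf v i j a) (fun ω => ∑ t ∈ S, Xf v i j t ω) μ := by
  classical
  have hdisj : Disjoint (Bblk i j a) (S.biUnion (Bblk i j)) := by
    rw [Finset.disjoint_left]
    intro k hk hk'
    obtain ⟨t, ht, hkt⟩ := Finset.mem_biUnion.1 hk'
    have hsep' := hsep t ht
    simp only [Bblk, Finset.mem_insert, Finset.mem_singleton] at hk hkt
    omega
  have hind := (hv_indep.indepFun_finset (Bblk i j a) (S.biUnion (Bblk i j)) hdisj hv_meas)
  set φ : ((k : (Bblk i j a : Finset ℤ)) → ℝ) → ℝ := fun u =>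
    u ⟨(a : ℤ) - (i : ℤ), mem_Bblk_left i j a⟩ *
      u ⟨(a : ℤ) - (j : ℤ), mem_Bblk_right i j a⟩ - (if i = j then 1 else 0) with hφ_def
  set ψ : ((k : (S.biUnion (Bblk i j) : Finset ℤ)) → ℝ) → ℝ := fun u =>
    ∑ t ∈ S.attach,
      (u ⟨(t.1 : ℤ) - (i : ℤ), Finset.mem_biUnion.2 ⟨t.1, t.2, mem_Bblk_left i j t.1⟩⟩ *
        u ⟨(t.1 : ℤ) - (j : ℤ), Finset.mem_biUnion.2 ⟨t.1, t.2, mem_Bblk_right i j t.1⟩⟩ -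
        (if i = j then 1 else 0)) with hψ_def
  have hφ : Measurable φ := by
    apply Measurable.sub
    · exact (measurable_pi_apply _).mul (measurable_pi_apply _)
    · exact measurable_const
  have hψ : Measurable ψ := by
    apply Finset.measurable_sum
    intro t _
    apply Measurable.sub
    · exact (measurable_pi_apply _).mul (measurable_pi_apply _)
    · exact measurable_const
  have h := hind.comp hφ hψ
  have h1 : φ ∘ (fun ω (k : (Bblk i j a : Finset ℤ)) => v k ω) = Xf v i j a := by
    funext ω
    simp only [Function.comp_apply, hφ_def, Xf]
  have h2 : ψ ∘ (fun ω (k : (S.biUnion (Bblk i j) : Finset ℤ)) => v k ω)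
      = fun ω => ∑ t ∈ S, Xf v i j t ω := by
    funext ω
    simp only [Function.comp_apply, hψ_def]
    rw [← Finset.sum_attach S (fun t => Xf v i j t ω)]
    apply Finset.sum_congr rfl
    intro t _
    simp only [Xf]
  rw [h1, h2] at h
  exact h

lemma Xf_measurable (v : ℤ → Ω → ℝ) (hv_meas : ∀ t, Measurable (v t)) (i j t : ℕ) :
    Measurable (Xf v i j t) :=
  ((hv_meas _).mul (hv_meas _)).sub measurable_const

lemma Xf_bdd (v : ℤ → Ω → ℝ) {b : ℝ} (hb1 : 1 ≤ b) (hvb : ∀ t ω, |v t ω| ≤ b)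
    (i j t : ℕ) (ω : Ω) : |Xf v i j t ω| ≤ 2 * b ^ 2 := by
  have hb0 : 0 ≤ b := le_trans zero_le_one hb1
  have h1 : |v ((t : ℤ) - (i : ℕ)) ω * v ((t : ℤ) - (j : ℕ)) ω| ≤ b ^ 2 := by
    rw [abs_mul, sq]
    exact mul_le_mul (hvb _ _) (hvb _ _) (abs_nonneg _) hb0
  have h2 : |(if i = j then (1:ℝ) else 0)| ≤ 1 := by
    split <;> simp
  have hb2 : (1:ℝ) ≤ b ^ 2 := by nlinarith
  calc |Xf v i j t ω| ≤ |v ((t : ℤ) - (i : ℕ)) ω * v ((t : ℤ) - (j : ℕ)) ω|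
        + |(if i = j then (1:ℝ) else 0)| := abs_sub _ _
    _ ≤ b ^ 2 + 1 := add_le_add h1 h2
    _ ≤ 2 * b ^ 2 := by nlinarith

lemma Xf_mean_zero (v : ℤ → Ω → ℝ) (hv_meas : ∀ t, Measurable (v t))
    (hv_indep : iIndepFun v μ)
    (hv_mean : ∀ t, ∫ ω, v t ω ∂μ = 0)
    (hv_var : ∀ t, ∫ ω, (v t ω) ^ 2 ∂μ = 1)
    {b : ℝ} (hb1 : 1 ≤ b) (hvb : ∀ t ω, |v t ω| ≤ b)
    (i j t : ℕ) : ∫ ω, Xf v i j t ω ∂μ = 0 := by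
  by_cases hij : i = j
  · subst hij
    simp only [Xf, if_pos rfl]
    have hint : Integrable (fun ω => v ((t : ℤ) - (i : ℕ)) ω * v ((t : ℤ) - (i : ℕ)) ω) μ := by
      refine integrable_of_abs_le ((hv_meas _).mul (hv_meas _)) (c := b ^ 2) ?_
      intro ω
      rw [abs_mul, sq]
      exact mul_le_mul (hvb _ _) (hvb _ _) (abs_nonneg _) (le_trans zero_le_one hb1)
    rw [integral_sub hint (integrable_const _)]
    have : (fun ω => v ((t : ℤ) - (i : ℕ)) ω * v ((t : ℤ) - (i : ℕ)) ω)
        = fun ω => (v ((t : ℤ) - (i : ℕ)) ω) ^ 2 := by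
      funext ω; ring
    rw [this, hv_var]
    simp [measure_univ]
  · simp only [Xf, if_neg hij]
    have hne : ((t : ℤ) - (i : ℕ)) ≠ ((t : ℤ) - (j : ℕ)) := by
      intro h
      apply hij
      omega
    have hind : IndepFun (v ((t : ℤ) - (i : ℕ))) (v ((t : ℤ) - (j : ℕ))) μ :=
      hv_indep.indepFun hne
    simp only [sub_zero]
    have := hind.integral_fun_mul_eq_mul_integral (hv_meas _).aestronglyMeasurable (hv_meas _).aestronglyMeasurable
    rw [this, hv_mean, hv_mean, mul_zero]

open scoped ENNReal in
lemma entry_bound (v : ℤ → Ω → ℝ) (hv_meas : ∀ t, Measurable (v t))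
    (hv_indep : iIndepFun v μ)
    (hv_mean : ∀ t, ∫ ω, v t ω ∂μ = 0)
    (hv_var : ∀ t, ∫ ω, (v t ω) ^ 2 ∂μ = 1)
    {b : ℝ} (hb1 : 1 ≤ b) (hvb : ∀ t ω, |v t ω| ≤ b)
    (W : Finset ℕ) {q K : ℕ} (hq : 0 < q) (hWK : W.card ≤ K) (hK0 : 0 < K)
    (i j : ℕ) (hi : i < q) (hj : j < q) {ε : ℝ} (hε : 0 < ε) :
    μ {ω | ε ≤ |∑ t ∈ W, Xf v i j t ω|}
      ≤ (q : ℝ≥0∞) * (2 * ENNReal.ofReal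
          (Real.exp (-(ε / q) ^ 2 / (2 * K * (2 * b ^ 2) ^ 2)))) := by
  classical
  have hq' : (0:ℝ) < q := by exact_mod_cast hq
  have hεq : 0 < ε / q := div_pos hε hq'
  set T : ℕ → Finset ℕ := fun r => W.filter (fun t => t % q = r) with hT_def
  have hsub : {ω | ε ≤ |∑ t ∈ W, Xf v i j t ω|}
      ⊆ ⋃ r ∈ Finset.range q, {ω | ε / q ≤ |∑ t ∈ T r, Xf v i j t ω|} := by
    intro ω hω
    simp only [Set.mem_setOf_eq] at hω
    by_contra hno
    simp only [Set.mem_iUnion, Set.mem_setOf_eq, not_exists, not_le] at hno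
    have hdecomp : ∑ t ∈ W, Xf v i j t ω
        = ∑ r ∈ Finset.range q, ∑ t ∈ T r, Xf v i j t ω := by
      rw [hT_def]
      exact (Finset.sum_fiberwise_of_maps_to
        (fun t _ => Finset.mem_range.2 (Nat.mod_lt _ hq)) _).symm
    have : |∑ t ∈ W, Xf v i j t ω| < ε := by
      rw [hdecomp]
      calc |∑ r ∈ Finset.range q, ∑ t ∈ T r, Xf v i j t ω|
          ≤ ∑ r ∈ Finset.range q, |∑ t ∈ T r, Xf v i j t ω| :=
            Finset.abs_sum_le_sum_abs _ _
        _ < ∑ _r ∈ Finset.range q, (ε / q) := by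
            refine Finset.sum_lt_sum_of_nonempty ?_ ?_
            · exact Finset.nonempty_range_iff.2 hq.ne'
            · intro r hr
              exact hno r hr
        _ = ε := by
            rw [Finset.sum_const, Finset.card_range, nsmul_eq_mul]
            field_simp
    linarith
  refine (measure_mono hsub).trans ?_
  refine (measure_biUnion_finset_le _ _).trans ?_
  have hbound : ∀ r ∈ Finset.range q,
      μ {ω | ε / q ≤ |∑ t ∈ T r, Xf v i j t ω|}
        ≤ 2 * ENNReal.ofReal (Real.exp (-(ε / q) ^ 2 / (2 * K * (2 * b ^ 2) ^ 2))) := by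
    intro r _
    refine hoeff_tail_abs (by positivity) (T r)
      (fun t _ => Xf_measurable v hv_meas i j t)
      (fun t _ ω => Xf_bdd v hb1 hvb i j t ω)
      (fun t _ => Xf_mean_zero v hv_meas hv_indep hv_mean hv_var hb1 hvb i j t)
      ?_ ((Finset.card_le_card (Finset.filter_subset _ _)).trans hWK) hK0 hεq
    intro s hs S hS hsS
    refine Xf_indep v hv_meas hv_indep i j q hi hj S s ?_
    intro t ht
    have htT : t ∈ T r := hS ht
    have hsT : s ∈ T r := hs
    rw [hT_def, Finset.mem_filter] at htT hsT
    have hmod : s % q = t % q := by rw [hsT.2, htT.2]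
    have hne : t ≠ s := fun h => hsS (h ▸ ht)
    have hdvd : (q : ℤ) ∣ (t : ℤ) - (s : ℤ) := (Nat.modEq_iff_dvd (n := q)).1 hmod
    rcases lt_trichotomy ((t : ℤ) - (s : ℤ)) 0 with hlt | heq | hgt
    · right
      have hdvd' : (q : ℤ) ∣ (s : ℤ) - (t : ℤ) := by
        have := dvd_neg.2 hdvd
        rwa [neg_sub] at this
      exact Int.le_of_dvd (by omega) hdvd'
    · exfalso; apply hne; omega
    · exact Or.inl (Int.le_of_dvd hgt hdvd)
  calc ∑ r ∈ Finset.range q, μ {ω | ε / q ≤ |∑ t ∈ T r, Xf v i j t ω|}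
      ≤ ∑ _r ∈ Finset.range q,
          2 * ENNReal.ofReal (Real.exp (-(ε / q) ^ 2 / (2 * K * (2 * b ^ 2) ^ 2))) :=
        Finset.sum_le_sum hbound
    _ = (q : ℝ≥0∞) * (2 * ENNReal.ofReal
          (Real.exp (-(ε / q) ^ 2 / (2 * K * (2 * b ^ 2) ^ 2)))) := by
        rw [Finset.sum_const, Finset.card_range, nsmul_eq_mul]

lemma quad_lower {Ω' : Type*} (v : ℤ → Ω' → ℝ) (ω : Ω') (W : Finset ℕ) {q : ℕ} (hq : 0 < q)
    {K : ℕ} (hWcard : W.card = K) {ε : ℝ} (hεval : ε = K / (2 * q))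
    (hgood : ∀ i < q, ∀ j < q, |∑ t ∈ W, Xf v i j t ω| < ε)
    (x : Fin q → ℝ) (hx : ∑ i, x i ^ 2 = 1) :
    (K : ℝ) / 2 ≤ ∑ t ∈ W, (∑ i : Fin q, x i * v ((t : ℤ) - (i : ℕ)) ω) ^ 2 := by
  classical
  have hq' : (0:ℝ) < q := by exact_mod_cast hq
  have hexp : ∑ t ∈ W, (∑ i : Fin q, x i * v ((t : ℤ) - (i : ℕ)) ω) ^ 2
      = ∑ i : Fin q, ∑ j : Fin q, (x i * x j) *
          ∑ t ∈ W, v ((t : ℤ) - (i : ℕ)) ω * v ((t : ℤ) - (j : ℕ)) ω := by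
    have h1 : ∀ t ∈ W, (∑ i : Fin q, x i * v ((t : ℤ) - (i : ℕ)) ω) ^ 2
        = ∑ i : Fin q, ∑ j : Fin q,
            (x i * x j) * (v ((t : ℤ) - (i : ℕ)) ω * v ((t : ℤ) - (j : ℕ)) ω) := by
      intro t _
      rw [sq, Finset.sum_mul_sum]
      exact Finset.sum_congr rfl fun i _ => Finset.sum_congr rfl fun j _ => by ring
    rw [Finset.sum_congr rfl h1, Finset.sum_comm]
    refine Finset.sum_congr rfl fun i _ => ?_
    rw [Finset.sum_comm]
    refine Finset.sum_congr rfl fun j _ => ?_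
    rw [Finset.mul_sum]
  have hdecomp : ∀ i j : Fin q,
      ∑ t ∈ W, v ((t : ℤ) - (i : ℕ)) ω * v ((t : ℤ) - (j : ℕ)) ω
        = (∑ t ∈ W, Xf v i j t ω) + (K : ℝ) * (if (i:ℕ) = (j:ℕ) then 1 else 0) := by
    intro i j
    have : ∀ t ∈ W, v ((t : ℤ) - (i : ℕ)) ω * v ((t : ℤ) - (j : ℕ)) ω
        = Xf v i j t ω + (if (i:ℕ) = (j:ℕ) then 1 else 0) := by
      intro t _
      simp [Xf]
    rw [Finset.sum_congr rfl this, Finset.sum_add_distrib, Finset.sum_const, hWcard,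
      nsmul_eq_mul]
  rw [hexp]
  simp_rw [hdecomp, mul_add]
  simp only [Finset.sum_add_distrib]
  have hB : ∑ i : Fin q, ∑ j : Fin q,
      (x i * x j) * ((K : ℝ) * (if (i:ℕ) = (j:ℕ) then 1 else 0)) = (K : ℝ) := by
    have : ∀ i : Fin q, ∑ j : Fin q,
        (x i * x j) * ((K : ℝ) * (if (i:ℕ) = (j:ℕ) then 1 else 0))
          = (K : ℝ) * x i ^ 2 := by
      intro i
      rw [Finset.sum_eq_single i]
      · simp; ring
      · intro j _ hji
        have : ¬((i:ℕ) = (j:ℕ)) := fun h => hji (Fin.val_injective h).symm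
        simp [this]
      · intro h; exact absurd (Finset.mem_univ i) h
    rw [Finset.sum_congr rfl fun i _ => this i, ← Finset.mul_sum, hx, mul_one]
  have hε0 : 0 ≤ ε := by
    rw [hεval]; positivity
  have hDev : ∀ i j : Fin q, |∑ t ∈ W, Xf v i j t ω| ≤ ε :=
    fun i j => (hgood i i.isLt j j.isLt).le
  have habs : |∑ i : Fin q, ∑ j : Fin q, (x i * x j) * ∑ t ∈ W, Xf v i j t ω|
      ≤ ∑ i : Fin q, ∑ j : Fin q, |x i| * |x j| * ε := by
    refine (Finset.abs_sum_le_sum_abs _ _).trans (Finset.sum_le_sum fun i _ => ?_)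
    refine (Finset.abs_sum_le_sum_abs _ _).trans (Finset.sum_le_sum fun j _ => ?_)
    rw [abs_mul, abs_mul]
    exact mul_le_mul_of_nonneg_left (hDev i j) (by positivity)
  have hsum2 : ∑ i : Fin q, ∑ j : Fin q, |x i| * |x j| * ε
      = (∑ i : Fin q, |x i|) ^ 2 * ε := by
    rw [sq, Finset.sum_mul_sum, Finset.sum_mul]
    simp_rw [Finset.sum_mul]
  have hCS : (∑ i : Fin q, |x i|) ^ 2 ≤ (q : ℝ) := by
    have h := sq_sum_le_card_mul_sum_sq (s := (Finset.univ : Finset (Fin q)))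
      (f := fun i => |x i|)
    simp only [sq_abs, Finset.card_univ, Fintype.card_fin, hx, mul_one] at h
    exact_mod_cast h
  have hqε : (q : ℝ) * ε = (K : ℝ) / 2 := by
    rw [hεval]
    field_simp
  have hAbound : |∑ i : Fin q, ∑ j : Fin q, (x i * x j) * ∑ t ∈ W, Xf v i j t ω|
      ≤ (K : ℝ) / 2 := by
    refine habs.trans ?_
    rw [hsum2, ← hqε]
    exact mul_le_mul_of_nonneg_right hCS hε0
  rw [hB]
  have := abs_le.1 hAbound
  linarith [this.1]

lemma eventually_small {b a η : ℝ} (hb1 : 1 ≤ b) (ha : 0 < a) (hη : 0 < η) :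
    ∀ᶠ n : ℕ in atTop,
      2 * ((⌊Real.log n ^ a⌋₊ + 1 : ℕ) : ℝ) ^ 3 *
        Real.exp (-((⌊(n : ℝ) ^ η⌋₊ + 1 : ℕ) : ℝ) /
          (32 * b ^ 4 * ((⌊Real.log n ^ a⌋₊ + 1 : ℕ) : ℝ) ^ 4)) ≤ (((n : ℝ)) ^ 2)⁻¹ := by
  have hb0 : (0:ℝ) < b := lt_of_lt_of_le one_pos hb1
  have hE1 : ∀ᶠ x : ℝ in atTop, 16 * Real.log x ^ (3 * a) ≤ x := by
    have h := (isLittleO_log_rpow_rpow_atTop (3 * a) one_pos).def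
      (by norm_num : (0:ℝ) < 1/16)
    filter_upwards [h, eventually_ge_atTop (1:ℝ), Real.tendsto_log_atTop.eventually_ge_atTop 0]
      with x hx hx1 hlx
    rw [Real.norm_eq_abs, Real.norm_eq_abs, Real.rpow_one,
      abs_of_nonneg (Real.rpow_nonneg hlx _), abs_of_nonneg (by linarith : (0:ℝ) ≤ x)] at hx
    linarith
  have hE2 : ∀ᶠ x : ℝ in atTop,
      1536 * b ^ 4 * Real.log x ^ (4 * a + 1) ≤ x ^ η := by
    have h := (isLittleO_log_rpow_rpow_atTop (4 * a + 1) hη).def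
      (by positivity : (0:ℝ) < 1 / (1536 * b ^ 4))
    filter_upwards [h, eventually_ge_atTop (1:ℝ), Real.tendsto_log_atTop.eventually_ge_atTop 0]
      with x hx hx1 hlx
    rw [Real.norm_eq_abs, Real.norm_eq_abs,
      abs_of_nonneg (Real.rpow_nonneg hlx _),
      abs_of_nonneg (Real.rpow_nonneg (by linarith : (0:ℝ) ≤ x) _),
      div_mul_eq_mul_div, le_div_iff₀ (by positivity)] at hx
    calc 1536 * b ^ 4 * Real.log x ^ (4 * a + 1)
        = Real.log x ^ (4 * a + 1) * (1536 * b ^ 4) := by ring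
      _ ≤ 1 * x ^ η := hx
      _ = x ^ η := one_mul _
  have hcast : Filter.Tendsto (fun n : ℕ => (n : ℝ)) atTop atTop := tendsto_natCast_atTop_atTop
  filter_upwards [hcast.eventually hE1, hcast.eventually hE2,
    hcast.eventually (Real.tendsto_log_atTop.eventually_ge_atTop 1),
    eventually_ge_atTop 1] with n h1 h2 hlog hn1
  have hn0 : (0:ℝ) < n := by exact_mod_cast hn1
  set L : ℝ := Real.log (n : ℝ) with hL_def
  have hL0 : (0:ℝ) ≤ L := by linarith
  have hy1 : (1:ℝ) ≤ L ^ a := by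
    calc (1:ℝ) = (1:ℝ) ^ a := (Real.one_rpow a).symm
      _ ≤ L ^ a := Real.rpow_le_rpow zero_le_one hlog ha.le
  set q : ℕ := ⌊L ^ a⌋₊ + 1 with hq_def
  set K : ℕ := ⌊(n : ℝ) ^ η⌋₊ + 1 with hK_def
  have hqle : (q : ℝ) ≤ 2 * L ^ a := by
    rw [hq_def]
    push_cast
    have := Nat.floor_le (by linarith : (0:ℝ) ≤ L ^ a)
    linarith
  have hq0 : (0:ℝ) ≤ (q : ℝ) := Nat.cast_nonneg _
  have hy3 : (L ^ a) ^ (3:ℕ) = L ^ (3 * a) := by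
    rw [← Real.rpow_natCast (L ^ a) 3, ← Real.rpow_mul hL0]
    norm_num [mul_comm]
  have hy4 : (L ^ a) ^ (4:ℕ) = L ^ (4 * a) := by
    rw [← Real.rpow_natCast (L ^ a) 4, ← Real.rpow_mul hL0]
    norm_num [mul_comm]
  have hq3 : (q : ℝ) ^ 3 ≤ 8 * L ^ (3 * a) := by
    calc (q : ℝ) ^ 3 ≤ (2 * L ^ a) ^ 3 := pow_le_pow_left₀ hq0 hqle 3
      _ = 8 * (L ^ a) ^ (3:ℕ) := by ring
      _ = 8 * L ^ (3 * a) := by rw [hy3]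
  have hq4 : (q : ℝ) ^ 4 ≤ 16 * L ^ (4 * a) := by
    calc (q : ℝ) ^ 4 ≤ (2 * L ^ a) ^ 4 := pow_le_pow_left₀ hq0 hqle 4
      _ = 16 * (L ^ a) ^ (4:ℕ) := by ring
      _ = 16 * L ^ (4 * a) := by rw [hy4]
  have h2q3 : 2 * (q : ℝ) ^ 3 ≤ (n : ℝ) := by
    calc 2 * (q : ℝ) ^ 3 ≤ 2 * (8 * L ^ (3 * a)) := by linarith
      _ = 16 * L ^ (3 * a) := by ring
      _ ≤ (n : ℝ) := h1
  have hKge : (n : ℝ) ^ η ≤ (K : ℝ) := by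
    rw [hK_def]
    push_cast
    exact (Nat.lt_floor_add_one _).le
  have hqpos : (0:ℝ) < (q : ℝ) := by positivity
  have hDpos : (0:ℝ) < 32 * b ^ 4 * (q : ℝ) ^ 4 := by positivity
  have hexp_le : -(K : ℝ) / (32 * b ^ 4 * (q : ℝ) ^ 4) ≤ -(3 * L) := by
    rw [neg_div, neg_le_neg_iff, le_div_iff₀ hDpos]
    calc 3 * L * (32 * b ^ 4 * (q : ℝ) ^ 4)
        ≤ 3 * L * (32 * b ^ 4 * (16 * L ^ (4 * a))) := by
          have h3L : (0:ℝ) ≤ 3 * L * (32 * b ^ 4) := by positivity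
          have h := mul_le_mul_of_nonneg_left hq4 h3L
          calc 3 * L * (32 * b ^ 4 * (q : ℝ) ^ 4)
              = 3 * L * (32 * b ^ 4) * (q : ℝ) ^ 4 := by ring
            _ ≤ 3 * L * (32 * b ^ 4) * (16 * L ^ (4 * a)) := h
            _ = 3 * L * (32 * b ^ 4 * (16 * L ^ (4 * a))) := by ring
      _ = 1536 * b ^ 4 * (L ^ (4 * a) * L) := by ring
      _ = 1536 * b ^ 4 * L ^ (4 * a + 1) := by
          rw [Real.rpow_add_one (by linarith : L ≠ 0)]
      _ ≤ (n : ℝ) ^ η := h2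
      _ ≤ (K : ℝ) := hKge
  have hexp3 : Real.exp (-(3 * L)) = (((n : ℝ)) ^ 3)⁻¹ := by
    rw [Real.exp_neg]
    congr 1
    rw [show (3:ℝ) * L = (3:ℕ) * L by norm_num, Real.exp_nat_mul, hL_def,
      Real.exp_log hn0]
  calc 2 * (q : ℝ) ^ 3 * Real.exp (-(K : ℝ) / (32 * b ^ 4 * (q : ℝ) ^ 4))
      ≤ (n : ℝ) * (((n : ℝ)) ^ 3)⁻¹ := by
        rw [← hexp3]
        exact mul_le_mul h2q3 (Real.exp_le_exp.2 hexp_le) (Real.exp_pos _).le hn0.le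
    _ = (((n : ℝ)) ^ 2)⁻¹ := by
        field_simp

end Helpers

/-- Lemma 2 of the paper: excitation of the dither signal.
Let `{v_t}_{t∈ℤ}` be i.i.d. with mean `0`, variance `1` and `|v_t| ≤ v̄`, let `a > 1`,
`p_n = ⌊(log n)^a⌋`, and `ψ_t(n) = (v_t, v_{t−1}, …, v_{t−p_n})ᵀ`. Then for each
`1/2 < η < 1`, almost surely there exist `c > 0` and `N ≥ 1` such that for every `n ≥ N`,
`λ_min{∑_{t=n−⌊n^η⌋}^n ψ_t(n) ψ_t(n)ᵀ} ≥ c n^η` (stated via the quadratic form over unit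
vectors). -/
theorem stmt4 {Ω : Type*} [MeasurableSpace Ω] (μ : Measure Ω) [IsProbabilityMeasure μ]
    (v : ℤ → Ω → ℝ) (hv_meas : ∀ t, Measurable (v t))
    (hv_indep : iIndepFun v μ)
    (hv_ident : ∀ t, μ.map (v t) = μ.map (v 0))
    (hv_mean : ∀ t, ∫ ω, v t ω ∂μ = 0)
    (hv_var : ∀ t, ∫ ω, (v t ω) ^ 2 ∂μ = 1)
    (vbar : ℝ) (hv_bdd : ∀ t ω, |v t ω| ≤ vbar)
    (a : ℝ) (ha : 1 < a) (pn : ℕ → ℕ) (hpn : ∀ n, pn n = ⌊Real.log n ^ a⌋₊)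
    (η : ℝ) (hη1 : 1 / 2 < η) (hη2 : η < 1) :
    ∀ᵐ ω ∂μ, ∃ c : ℝ, 0 < c ∧ ∃ N : ℕ, 1 ≤ N ∧ ∀ n ≥ N,
      ∀ x : Fin (pn n + 1) → ℝ, (∑ i, x i ^ 2) = 1 →
        c * (n : ℝ) ^ η ≤
          ∑ t ∈ Finset.Icc (n - ⌊(n : ℝ) ^ η⌋₊) n,
            (∑ i : Fin (pn n + 1), x i * v ((t : ℤ) - (i : ℕ)) ω) ^ 2 := by
  classical
  set b : ℝ := max vbar 1 with hb_def
  have hb1 : 1 ≤ b := le_max_right _ _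
  have hvb : ∀ t ω, |v t ω| ≤ b := fun t ω => (hv_bdd t ω).trans (le_max_left _ _)
  set q : ℕ → ℕ := fun n => pn n + 1 with hq_def
  set K : ℕ → ℕ := fun n => ⌊(n : ℝ) ^ η⌋₊ + 1 with hK_def
  set W : ℕ → Finset ℕ := fun n => Finset.Icc (n - ⌊(n : ℝ) ^ η⌋₊) n with hW_def
  set ε : ℕ → ℝ := fun n => (K n : ℝ) / (2 * q n) with hε_def
  set Bad : ℕ → Set Ω := fun n =>
    ⋃ i ∈ Finset.range (q n), ⋃ j ∈ Finset.range (q n),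
      {ω | ε n ≤ |∑ t ∈ W n, Xf v i j t ω|} with hBad_def
  have hq0 : ∀ n, 0 < q n := fun n => Nat.succ_pos _
  have hK0 : ∀ n, 0 < K n := fun n => Nat.succ_pos _
  have hεpos : ∀ n, 0 < ε n := by
    intro n
    apply div_pos
    · exact_mod_cast hK0 n
    · have := hq0 n; positivity
  have hWcard : ∀ n, 1 ≤ n → (W n).card = K n := by
    intro n hn
    have hfl : ⌊(n : ℝ) ^ η⌋₊ ≤ n := by
      have h1 : (n : ℝ) ^ η ≤ ((n : ℝ)) ^ (1:ℝ) := by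
        apply Real.rpow_le_rpow_of_exponent_le _ hη2.le
        exact_mod_cast hn
      rw [Real.rpow_one] at h1
      calc ⌊(n : ℝ) ^ η⌋₊ ≤ ⌊(n : ℝ)⌋₊ := Nat.floor_le_floor h1
        _ = n := Nat.floor_natCast n
    rw [hW_def, hK_def]
    simp only [Nat.card_Icc]
    omega
  -- per-n probability bound
  have hμBad : ∀ n : ℕ, 1 ≤ n → μ (Bad n) ≤ ENNReal.ofReal
      (2 * (q n : ℝ) ^ 3 * Real.exp (-(K n : ℝ) / (32 * b ^ 4 * (q n : ℝ) ^ 4))) := by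
    intro n hn
    have hqR : (0:ℝ) < q n := by exact_mod_cast hq0 n
    have hKR : (0:ℝ) < K n := by exact_mod_cast hK0 n
    have hbR : (0:ℝ) < b := lt_of_lt_of_le one_pos hb1
    have hEeq : -(ε n / q n) ^ 2 / (2 * (K n) * (2 * b ^ 2) ^ 2)
        = -(K n : ℝ) / (32 * b ^ 4 * (q n : ℝ) ^ 4) := by
      rw [hε_def]
      field_simp
      ring
    have hone : ∀ i ∈ Finset.range (q n), ∀ j ∈ Finset.range (q n),
        μ {ω | ε n ≤ |∑ t ∈ W n, Xf v i j t ω|}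
          ≤ (q n : ENNReal) * (2 * ENNReal.ofReal
              (Real.exp (-(ε n / q n) ^ 2 / (2 * (K n) * (2 * b ^ 2) ^ 2)))) := by
      intro i hi j hj
      exact entry_bound v hv_meas hv_indep hv_mean hv_var hb1 hvb (W n) (hq0 n)
        (le_of_eq (hWcard n hn)) (hK0 n) i j (Finset.mem_range.1 hi) (Finset.mem_range.1 hj)
        (hεpos n)
    have hstep : μ (Bad n) ≤ (q n : ENNReal) * ((q n : ENNReal) * ((q n : ENNReal) *
        (2 * ENNReal.ofReal
          (Real.exp (-(ε n / q n) ^ 2 / (2 * (K n) * (2 * b ^ 2) ^ 2)))))) := by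
      rw [hBad_def]
      refine (measure_biUnion_finset_le _ _).trans ?_
      calc ∑ i ∈ Finset.range (q n), μ (⋃ j ∈ Finset.range (q n),
              {ω | ε n ≤ |∑ t ∈ W n, Xf v i j t ω|})
          ≤ ∑ i ∈ Finset.range (q n), ∑ j ∈ Finset.range (q n),
              μ {ω | ε n ≤ |∑ t ∈ W n, Xf v i j t ω|} :=
            Finset.sum_le_sum fun i _ => measure_biUnion_finset_le _ _
        _ ≤ ∑ _i ∈ Finset.range (q n), ∑ _j ∈ Finset.range (q n),
              (q n : ENNReal) * (2 * ENNReal.ofReal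
                (Real.exp (-(ε n / q n) ^ 2 / (2 * (K n) * (2 * b ^ 2) ^ 2)))) := by
            refine Finset.sum_le_sum fun i hi => Finset.sum_le_sum fun j hj => ?_
            exact hone i hi j hj
        _ = (q n : ENNReal) * ((q n : ENNReal) * ((q n : ENNReal) *
              (2 * ENNReal.ofReal
                (Real.exp (-(ε n / q n) ^ 2 / (2 * (K n) * (2 * b ^ 2) ^ 2)))))) := by
            rw [Finset.sum_const, Finset.sum_const, Finset.card_range, nsmul_eq_mul,
              nsmul_eq_mul]
    refine hstep.trans ?_
    rw [hEeq]
    have hgoal : (q n : ENNReal) * ((q n : ENNReal) * ((q n : ENNReal) *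
        (2 * ENNReal.ofReal (Real.exp (-(K n : ℝ) / (32 * b ^ 4 * (q n : ℝ) ^ 4))))))
        = ENNReal.ofReal
          (2 * (q n : ℝ) ^ 3 * Real.exp (-(K n : ℝ) / (32 * b ^ 4 * (q n : ℝ) ^ 4))) := by
      rw [← ENNReal.ofReal_natCast (q n), ← ENNReal.ofReal_ofNat 2,
        ← ENNReal.ofReal_mul (by positivity), ← ENNReal.ofReal_mul (by positivity),
        ← ENNReal.ofReal_mul (by positivity), ← ENNReal.ofReal_mul (by positivity)]
      congr 1
      ring
    rw [hgoal]
  -- summability of the bad-event probabilities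
  have ha0 : 0 < a := lt_trans one_pos ha
  have hη0 : 0 < η := lt_trans (by norm_num) hη1
  have hev := eventually_small (b := b) (a := a) (η := η) hb1 ha0 hη0
  obtain ⟨N₀, hN₀⟩ := Filter.eventually_atTop.1 (hev.and (Filter.eventually_ge_atTop 1))
  set g : ℕ → ℝ := fun n => if n < N₀ then 1 else (((n : ℝ)) ^ 2)⁻¹ with hg_def
  have hg_nonneg : ∀ n, 0 ≤ g n := by
    intro n
    simp only [hg_def]
    split <;> positivity
  have hg_sum : Summable g := by
    have hs : Summable (fun n : ℕ => (((n : ℝ)) ^ 2)⁻¹) := by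
      have := Real.summable_nat_pow_inv (p := 2)
      exact this.2 one_lt_two
    refine (summable_nat_add_iff N₀).1 ?_
    refine Summable.congr ((summable_nat_add_iff (f := fun n : ℕ => (((n : ℝ)) ^ 2)⁻¹) N₀).2 hs) ?_
    intro n
    simp only [hg_def]
    rw [if_neg (by omega)]
  have hμg : ∀ n, μ (Bad n) ≤ ENNReal.ofReal (g n) := by
    intro n
    simp only [hg_def]
    split
    · exact (prob_le_one).trans_eq (by simp)
    · rename_i hn
      push_neg at hn
      obtain ⟨hsmall, hn1⟩ := hN₀ n hn
      refine (hμBad n hn1).trans (ENNReal.ofReal_le_ofReal ?_)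
      have hqe : q n = ⌊Real.log n ^ a⌋₊ + 1 := by rw [hq_def]; simp [hpn n]
      rw [hqe, hK_def]
      exact hsmall
  have htsum : (∑' n, μ (Bad n)) ≠ ⊤ := by
    have h1 : (∑' n, μ (Bad n)) ≤ ∑' n, ENNReal.ofReal (g n) := ENNReal.tsum_le_tsum hμg
    have h2 : ∑' n, ENNReal.ofReal (g n) = ENNReal.ofReal (∑' n, g n) :=
      (ENNReal.ofReal_tsum_of_nonneg hg_nonneg hg_sum).symm
    rw [h2] at h1
    exact ne_top_of_le_ne_top ENNReal.ofReal_ne_top h1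
  -- Borel--Cantelli
  have hae := MeasureTheory.ae_eventually_notMem htsum
  filter_upwards [hae] with ω hω
  obtain ⟨N₁, hN₁⟩ := Filter.eventually_atTop.1 hω
  refine ⟨1/2, by norm_num, max N₁ 1, le_max_right _ _, ?_⟩
  intro n hn x hx
  have hn1 : 1 ≤ n := le_trans (le_max_right N₁ 1) hn
  have hnotbad : ω ∉ Bad n := hN₁ n (le_trans (le_max_left _ _) hn)
  have hgood : ∀ i < q n, ∀ j < q n, |∑ t ∈ W n, Xf v i j t ω| < ε n := by
    intro i hi j hj
    by_contra h
    push_neg at h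
    apply hnotbad
    rw [hBad_def]
    simp only [Set.mem_iUnion, Set.mem_setOf_eq]
    exact ⟨i, Finset.mem_range.2 hi, j, Finset.mem_range.2 hj, h⟩
  have hKlow : (n : ℝ) ^ η ≤ (K n : ℝ) := by
    rw [hK_def]
    push_cast
    exact (Nat.lt_floor_add_one _).le
  have hmain := quad_lower v ω (W n) (hq0 n) (hWcard n hn1)
    (by rw [hε_def] : ε n = (K n : ℝ) / (2 * q n)) hgood x hx
  calc (1/2 : ℝ) * (n : ℝ) ^ η ≤ (K n : ℝ) / 2 := by linarith
    _ ≤ ∑ t ∈ W n, (∑ i : Fin (q n), x i * v ((t : ℤ) - (i : ℕ)) ω) ^ 2 := hmain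
end

section
/- Let A be a real p × p matrix and let ρ(A) denote its spectral radius (the maximum modulus of its complex eigenvalues). Then for any ε > 0, ‖A^i‖ ≤ M λ^i for all i ≥ 0, where M = (1 + 2/ε)^{p−1} √p and λ = ρ(A) + ε‖A‖. -/
open scoped Matrix
open Module Submodule Matrix

local notation "⟪" x ", " y "⟫" => @inner ℂ _ _ x y

noncomputable section SchurAux



lemma schur_aux : ∀ (n : ℕ) (E : Type) [NormedAddCommGroup E] [InnerProductSpace ℂ E]
    [FiniteDimensional ℂ E], finrank ℂ E = n → ∀ f : E →ₗ[ℂ] E,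
    ∃ b : OrthonormalBasis (Fin n) ℂ E, ∀ j k : Fin n, j < k → ⟪b k, f (b j)⟫ = 0 := by
  intro n
  induction n with
  | zero =>
    intro E _ _ _ hE f
    exact ⟨(stdOrthonormalBasis ℂ E).reindex (finCongr hE), fun j k h => j.elim0⟩
  | succ n IH =>
    intro E _ _ _ hE f
    have : Nontrivial E := by
      have : 0 < finrank ℂ E := by omega
      exact finrank_pos_iff.mp this
    obtain ⟨μ, hμ⟩ := Module.End.exists_eigenvalue f
    obtain ⟨v, hv⟩ := hμ.exists_hasEigenvector
    have hv0 : v ≠ 0 := hv.right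
    set u : E := ((‖v‖ : ℂ))⁻¹ • v with hu_def
    have hu_norm : ‖u‖ = 1 := by
      rw [hu_def, norm_smul, norm_inv]
      simp only [Complex.norm_real, Real.norm_eq_abs, abs_norm]
      exact inv_mul_cancel₀ (norm_ne_zero_iff.mpr hv0)
    have hu0 : u ≠ 0 := by
      intro h; rw [h] at hu_norm; simp at hu_norm
    have hfu : f u = μ • u := by
      rw [hu_def, _root_.map_smul, hv.apply_eq_smul, smul_comm]
    set K : Submodule ℂ E := (ℂ ∙ u)ᗮ with hK_def
    have hK_rank : finrank ℂ K = n := by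
      have h1 := (ℂ ∙ u).finrank_add_finrank_orthogonal
      rw [finrank_span_singleton hu0, hE, ← hK_def] at h1
      omega
    set g : K →ₗ[ℂ] K :=
      (orthogonalProjection K).toLinearMap ∘ₗ f ∘ₗ K.subtype with hg_def
    obtain ⟨w, hw⟩ := IH K hK_rank g
    set v' : Fin (n+1) → E := Fin.cons u (fun i => (w i : E)) with hv'_def
    have hwu : ∀ i, ⟪u, (w i : E)⟫ = 0 := fun i =>
      ((Submodule.mem_orthogonal (ℂ ∙ u) _).mp (w i).2) u (Submodule.mem_span_singleton_self u)
    have huw : ∀ i, ⟪(w i : E), u⟫ = 0 := by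
      intro i
      rw [← inner_conj_symm, hwu i, map_zero]
    have hv'_on : Orthonormal ℂ v' := by
      rw [orthonormal_iff_ite]
      intro i j
      refine Fin.cases ?_ ?_ i
      · refine Fin.cases ?_ ?_ j
        · simp only [hv'_def, Fin.cons_zero, if_pos rfl]
          rw [inner_self_eq_norm_sq_to_K, hu_norm]; norm_num
        · intro j'
          simp only [hv'_def, Fin.cons_zero, Fin.cons_succ]
          rw [if_neg (by simp [Fin.ext_iff]), hwu j']
      · intro i'
        refine Fin.cases ?_ ?_ j
        · simp only [hv'_def, Fin.cons_zero, Fin.cons_succ]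
          rw [if_neg (by simp [Fin.ext_iff]), huw i']
        · intro j'
          simp only [hv'_def, Fin.cons_succ]
          have h2 := (orthonormal_iff_ite.mp w.orthonormal) i' j'
          rw [Submodule.coe_inner] at h2
          rw [h2]
          simp [Fin.ext_iff]
    have hcard : Fintype.card (Fin (n+1)) = finrank ℂ E := by simp [hE]
    let bb : Basis (Fin (n+1)) ℂ E :=
      basisOfLinearIndependentOfCardEqFinrank hv'_on.linearIndependent hcard
    have hbb : ⇑bb = v' := coe_basisOfLinearIndependentOfCardEqFinrank _ _
    let b : OrthonormalBasis (Fin (n+1)) ℂ E := bb.toOrthonormalBasis (by rwa [hbb])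
    have hb : ⇑b = v' := by
      rw [Basis.coe_toOrthonormalBasis, hbb]
    have key : ∀ (j' k' : Fin n), j' < k' → ⟪(w k' : E), f ((w j' : E))⟫ = 0 := by
      intro j' k' hlt
      have hsplit : f (w j' : E) =
          (f (w j' : E) - (orthogonalProjection K (f (w j' : E)) : E))
            + (orthogonalProjection K (f (w j' : E)) : E) := by abel
      rw [hsplit, inner_add_right]
      have h1 : ⟪(w k' : E), f (w j' : E) - (orthogonalProjection K (f (w j' : E)) : E)⟫ = 0 :=
        ((Submodule.mem_orthogonal K _).mp
          (K.sub_starProjection_mem_orthogonal _)) (w k' : E) (w k').2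
      have h2 : ⟪(w k' : E), ((orthogonalProjection K (f (w j' : E)) : K) : E)⟫ = 0 := by
        have := hw j' k' hlt
        rw [Submodule.coe_inner] at this
        exact this
      rw [h1, h2, add_zero]
    refine ⟨b, fun j k hjk => ?_⟩
    rw [hb]
    induction j using Fin.cases with
    | zero =>
      induction k using Fin.cases with
      | zero => exact absurd hjk (lt_irrefl _)
      | succ k' =>
        simp only [hv'_def, Fin.cons_zero, Fin.cons_succ]
        rw [hfu, inner_smul_right, huw k', mul_zero]
    | succ j' =>
      induction k using Fin.cases with
      | zero =>
        exfalso
        have := hjk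
        simp [Fin.lt_iff_val_lt_val] at this
      | succ k' =>
        simp only [hv'_def, Fin.cons_succ]
        exact key j' k' (by simpa [Fin.succ_lt_succ_iff] using hjk)



lemma schur_matrix (p : ℕ) (B : Matrix (Fin p) (Fin p) ℂ) :
    ∃ U T : Matrix (Fin p) (Fin p) ℂ,
      star U * U = 1 ∧ U * star U = 1 ∧
      (∀ j k : Fin p, (k : ℕ) < (j : ℕ) → T j k = 0) ∧
      B = U * T * star U ∧ T = star U * B * U := by
  obtain ⟨b, hb⟩ := schur_aux p (EuclideanSpace ℂ (Fin p)) finrank_euclideanSpace_fin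
    (Matrix.toEuclideanLin B)
  set U : Matrix (Fin p) (Fin p) ℂ := Matrix.of fun j k => b k j with hU_def
  have hUU : star U * U = 1 := by
    ext k l
    rw [Matrix.star_eq_conjTranspose, Matrix.mul_apply]
    have : ∀ j, Uᴴ k j * U j l = (starRingEnd ℂ) (b k j) * (b l j) := by
      intro j; rw [Matrix.conjTranspose_apply, hU_def]; rfl
    rw [Finset.sum_congr rfl fun j _ => this j]
    have horb := orthonormal_iff_ite.mp b.orthonormal k l
    rw [PiLp.inner_apply] at horb
    simp only [RCLike.inner_apply] at horb
    rw [Matrix.one_apply, ← horb]; exact Finset.sum_congr rfl fun _ _ => mul_comm _ _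
  have hUU' : U * star U = 1 := mul_eq_one_comm.mp hUU
  refine ⟨U, star U * B * U, hUU, hUU', ?_, ?_, rfl⟩
  · intro j k hkj
    have hT : (star U * B * U) j k = ⟪b j, Matrix.toEuclideanLin B (b k)⟫ := by
      rw [Matrix.star_eq_conjTranspose, Matrix.mul_assoc, Matrix.mul_apply, PiLp.inner_apply]
      refine Finset.sum_congr rfl fun i _ => ?_
      rw [Matrix.conjTranspose_apply, RCLike.inner_apply, mul_comm _ ((starRingEnd ℂ) _)]
      congr 1
    rw [hT, hb k j (by rwa [Fin.lt_iff_val_lt_val])]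
  · rw [show U * (star U * B * U) * star U = (U * star U) * B * (U * star U) from by
      noncomm_ring, hUU', Matrix.one_mul, Matrix.mul_one]

lemma euclid_norm_le_of_sq {p : ℕ} {𝕜 : Type*} [RCLike 𝕜] (x : EuclideanSpace 𝕜 (Fin p)) (c : ℝ)
    (hc : 0 ≤ c) (h : ∑ j, ‖x j‖ ^ 2 ≤ c ^ 2) : ‖x‖ ≤ c := by
  rw [EuclideanSpace.norm_eq]
  have h2 : ∀ j : Fin p, ‖x j‖ ^ 2 = ‖x j‖ ^ 2 := fun _ => rfl
  calc Real.sqrt (∑ j, ‖x j‖ ^ 2) ≤ Real.sqrt (c ^ 2) := Real.sqrt_le_sqrt h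
  _ = c := Real.sqrt_sq hc

lemma band_norm_le {p : ℕ} (m : ℕ) (M : Matrix (Fin p) (Fin p) ℂ) (c : ℝ) (hc : 0 ≤ c)
    (hband : ∀ j k : Fin p, M j k ≠ 0 → (k : ℕ) = (j : ℕ) + m)
    (hent : ∀ j k : Fin p, ‖M j k‖ ≤ c) :
    ‖Matrix.toEuclideanCLM (𝕜 := ℂ) M‖ ≤ c := by
  refine ContinuousLinearMap.opNorm_le_bound _ hc fun x => ?_
  set y : EuclideanSpace ℂ (Fin p) := Matrix.toEuclideanCLM (𝕜 := ℂ) M x with hy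
  have hyj : ∀ j, y j = ∑ k, M j k * x k := by
    intro j
    have h0 : y j = Matrix.toLin' M (WithLp.equiv _ _ x) j := rfl
    rw [h0, Matrix.toLin'_apply]
    simp [Matrix.mulVec, dotProduct]
  set z : Fin p → ℝ := fun j => if h : (j : ℕ) + m < p then ‖x ⟨(j : ℕ) + m, h⟩‖ else 0 with hz
  have hyz : ∀ j, ‖y j‖ ≤ c * z j := by
    intro j
    by_cases h : (j : ℕ) + m < p
    · have : y j = M j ⟨(j : ℕ) + m, h⟩ * x ⟨(j : ℕ) + m, h⟩ := by
        rw [hyj]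
        refine Finset.sum_eq_single _ (fun k _ hk => ?_) (fun hk => absurd (Finset.mem_univ _) hk)
        by_cases hMk : M j k = 0
        · rw [hMk, zero_mul]
        · exact absurd (Fin.ext (hband j k hMk) : k = ⟨(j : ℕ) + m, h⟩) hk
      rw [this, norm_mul, hz]
      simp only [dif_pos h]
      exact mul_le_mul_of_nonneg_right (hent _ _) (norm_nonneg _)
    · have : y j = 0 := by
        rw [hyj]
        refine Finset.sum_eq_zero fun k _ => ?_
        by_cases hMk : M j k = 0
        · rw [hMk, zero_mul]
        · exact absurd (hband j k hMk ▸ k.2) h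
      rw [this, norm_zero, hz]
      simp only [dif_neg h, mul_zero]
      exact le_refl 0
  have hzsum : ∑ j, (z j) ^ 2 ≤ ∑ k, ‖x k‖ ^ 2 := by
    have hzrw : ∀ j : Fin p,
        (z j) ^ 2 = ∑ k : Fin p, if k.val = (j : ℕ) + m then ‖x k‖ ^ 2 else 0 := by
      intro j
      by_cases h : (j : ℕ) + m < p
      · rw [Finset.sum_eq_single (⟨(j : ℕ) + m, h⟩ : Fin p)
          (fun k _ hk => if_neg (fun hc => hk (Fin.ext hc)))
          (fun hk => absurd (Finset.mem_univ _) hk)]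
        rw [if_pos rfl, hz]; simp only [dif_pos h]
      · rw [Finset.sum_eq_zero (fun k _ => if_neg
          (fun (hcc : k.val = (j : ℕ) + m) => h (lt_of_eq_of_lt hcc.symm k.2)))]
        rw [hz]; simp only [dif_neg h]; norm_num
    calc ∑ j, (z j) ^ 2
        = ∑ j : Fin p, ∑ k : Fin p, if k.val = (j : ℕ) + m then ‖x k‖ ^ 2 else 0 :=
          Finset.sum_congr rfl fun j _ => hzrw j
    _ = ∑ k : Fin p, ∑ j : Fin p, if k.val = (j : ℕ) + m then ‖x k‖ ^ 2 else 0 :=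
          Finset.sum_comm
    _ ≤ ∑ k, ‖x k‖ ^ 2 := by
        refine Finset.sum_le_sum fun k _ => ?_
        by_cases hk : m ≤ (k : ℕ)
        · have hlt : (k : ℕ) - m < p := lt_of_le_of_lt (Nat.sub_le _ _) k.2
          rw [Finset.sum_eq_single (⟨(k : ℕ) - m, hlt⟩ : Fin p)
            (fun j _ hj => if_neg (fun (hcc : k.val = (j : ℕ) + m) =>
              hj (Fin.ext (by simp only [Fin.val_mk]; omega))))
            (fun hj => absurd (Finset.mem_univ _) hj)]
          split
          · exact le_refl _
          · positivity
        · rw [Finset.sum_eq_zero (fun j _ => if_neg (fun hcc => hk (by omega)))]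
          positivity
  refine euclid_norm_le_of_sq y (c * ‖x‖) (mul_nonneg hc (norm_nonneg _)) ?_
  calc ∑ j, ‖y j‖ ^ 2 ≤ ∑ j, (c * z j) ^ 2 :=
        Finset.sum_le_sum fun j _ => by
          have := hyz j
          have h0 : (0:ℝ) ≤ ‖y j‖ := norm_nonneg _
          nlinarith [this, h0]
  _ = c ^ 2 * ∑ j, (z j) ^ 2 := by rw [Finset.mul_sum]; exact Finset.sum_congr rfl fun j _ => by ring
  _ ≤ c ^ 2 * ∑ k, ‖x k‖ ^ 2 := by
        exact mul_le_mul_of_nonneg_left hzsum (by positivity)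
  _ = (c * ‖x‖) ^ 2 := by
        rw [EuclideanSpace.norm_eq, mul_pow, Real.sq_sqrt (by positivity)]

lemma entry_le_norm {p : ℕ} (M : Matrix (Fin p) (Fin p) ℂ) (j k : Fin p) :
    ‖M j k‖ ≤ ‖Matrix.toEuclideanCLM (𝕜 := ℂ) M‖ := by
  set x : EuclideanSpace ℂ (Fin p) := EuclideanSpace.single k 1 with hx
  set y : EuclideanSpace ℂ (Fin p) := Matrix.toEuclideanCLM (𝕜 := ℂ) M x with hy
  have hyj : y j = M j k := by
    have h0 : y j = Matrix.toLin' M (WithLp.equiv _ _ x) j := rfl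
    rw [h0, Matrix.toLin'_apply]
    have : (WithLp.equiv _ _ x) = Pi.single k (1:ℂ) := by
      funext i
      rw [hx]
      simp [EuclideanSpace.single_apply, Pi.single_apply]
    rw [this, Matrix.mulVec_single]
    simp
  have h1 : ‖y j‖ ≤ ‖y‖ := by
    rw [EuclideanSpace.norm_eq]
    have hs : ‖y j‖ ^ 2 ≤ ∑ i, ‖y i‖ ^ 2 :=
      Finset.single_le_sum (f := fun i => ‖y i‖ ^ 2) (fun i _ => by positivity)
        (Finset.mem_univ j)
    calc ‖y j‖ = Real.sqrt (‖y j‖ ^ 2) := (Real.sqrt_sq (norm_nonneg _)).symm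
    _ ≤ Real.sqrt (∑ i, ‖y i‖ ^ 2) := Real.sqrt_le_sqrt hs
  calc ‖M j k‖ = ‖y j‖ := by rw [hyj]
  _ ≤ ‖y‖ := h1
  _ ≤ ‖Matrix.toEuclideanCLM (𝕜 := ℂ) M‖ * ‖x‖ := (Matrix.toEuclideanCLM (𝕜 := ℂ) M).le_opNorm x
  _ = ‖Matrix.toEuclideanCLM (𝕜 := ℂ) M‖ := by
      rw [hx, EuclideanSpace.norm_single, norm_one, mul_one]



lemma unitary_norm_le {p : ℕ} (U : Matrix (Fin p) (Fin p) ℂ) (hU : star U * U = 1) :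
    ‖Matrix.toEuclideanCLM (𝕜 := ℂ) U‖ ≤ 1 := by
  refine ContinuousLinearMap.opNorm_le_bound _ zero_le_one fun x => ?_
  set u := Matrix.toEuclideanCLM (𝕜 := ℂ) U with hu
  have h1 : star u * u = 1 := by rw [hu, ← map_star (Matrix.toEuclideanCLM (𝕜 := ℂ)) U, ← _root_.map_mul, hU, _root_.map_one]
  have h3 : (ContinuousLinearMap.adjoint u) (u x) = x := by
    rw [← ContinuousLinearMap.star_eq_adjoint]
    have : (star u * u) x = x := by rw [h1]; rfl
    exact this
  have h4 : ⟪u x, u x⟫ = ⟪x, x⟫ := by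
    rw [← ContinuousLinearMap.adjoint_inner_left, h3]
  have h5 : ‖u x‖ = ‖x‖ := by
    have h7 : (‖u x‖ : ℝ) ^ 2 = ‖x‖ ^ 2 := by
      rw [← inner_self_eq_norm_sq (𝕜 := ℂ), ← inner_self_eq_norm_sq (𝕜 := ℂ), h4]
    calc ‖u x‖ = Real.sqrt (‖u x‖ ^ 2) := (Real.sqrt_sq (norm_nonneg _)).symm
    _ = Real.sqrt (‖x‖ ^ 2) := by rw [h7]
    _ = ‖x‖ := Real.sqrt_sq (norm_nonneg _)
  rw [h5, one_mul]

lemma diag_le_spectralRadius {p : ℕ} (B U T : Matrix (Fin p) (Fin p) ℂ)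
    (hp : 0 < p) (hUU' : U * star U = 1)
    (hBT : B = U * T * star U)
    (hTri : ∀ j k : Fin p, (k : ℕ) < (j : ℕ) → T j k = 0) (j : Fin p) :
    ‖T j j‖ ≤ (spectralRadius ℂ B).toReal := by
  haveI : Nontrivial (EuclideanSpace ℂ (Fin p)) := by
    refine ⟨⟨EuclideanSpace.single (⟨0, hp⟩ : Fin p) (1 : ℂ), 0, fun h => ?_⟩⟩
    have h1 : ‖EuclideanSpace.single (⟨0, hp⟩ : Fin p) (1 : ℂ)‖ = 1 := by
      rw [EuclideanSpace.norm_single]; norm_num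
    rw [h, norm_zero] at h1
    norm_num at h1
  have hmem : T j j ∈ spectrum ℂ B := by
    rw [spectrum.mem_iff]
    intro hunit
    rw [Matrix.isUnit_iff_isUnit_det] at hunit
    have hconj : (algebraMap ℂ (Matrix (Fin p) (Fin p) ℂ)) (T j j) - B
        = U * ((algebraMap ℂ (Matrix (Fin p) (Fin p) ℂ)) (T j j) - T) * star U := by
      rw [hBT, Matrix.mul_sub, Matrix.sub_mul]
      congr 1
      rw [Algebra.algebraMap_eq_smul_one, Matrix.mul_smul, Matrix.mul_one, Matrix.smul_mul, hUU']
    have hdet : ((algebraMap ℂ (Matrix (Fin p) (Fin p) ℂ)) (T j j) - B).det = 0 := by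
      rw [hconj, Matrix.det_mul, Matrix.det_mul]
      have htri2 : ((algebraMap ℂ (Matrix (Fin p) (Fin p) ℂ)) (T j j) - T).BlockTriangular id := by
        intro a b hab
        simp only [id] at hab
        rw [Matrix.sub_apply, Algebra.algebraMap_eq_smul_one, Matrix.smul_apply,
          Matrix.one_apply_ne (Fin.ne_of_gt hab), smul_zero, hTri a b hab, sub_zero]
      rw [Matrix.det_of_upperTriangular htri2]
      have : ∏ i, ((algebraMap ℂ (Matrix (Fin p) (Fin p) ℂ)) (T j j) - T) i i = 0 := by
        refine Finset.prod_eq_zero (Finset.mem_univ j) ?_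
        rw [Matrix.sub_apply, Algebra.algebraMap_eq_smul_one, Matrix.smul_apply,
          Matrix.one_apply_eq, smul_eq_mul, mul_one, sub_self]
      rw [this, mul_zero, zero_mul]
    rw [hdet] at hunit
    exact (isUnit_iff_ne_zero.mp hunit) rfl
  have hspec_eq : spectrum ℂ B = spectrum ℂ (Matrix.toEuclideanCLM (𝕜 := ℂ) B) :=
    (AlgEquiv.spectrum_eq (Matrix.toEuclideanCLM (𝕜 := ℂ)) B).symm
  have h1 : (‖T j j‖₊ : ENNReal) ≤ spectralRadius ℂ B := by
    rw [spectralRadius]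
    exact le_iSup₂ (f := fun k (_ : k ∈ spectrum ℂ B) => (‖k‖₊ : ENNReal)) (T j j) hmem
  have hfin : spectralRadius ℂ B ≠ ⊤ := by
    rw [show spectralRadius ℂ B = spectralRadius ℂ (Matrix.toEuclideanCLM (𝕜 := ℂ) B) from by
      rw [spectralRadius, spectralRadius, hspec_eq]]
    exact ne_top_of_le_ne_top ENNReal.coe_ne_top
      (spectrum.spectralRadius_le_nnnorm (Matrix.toEuclideanCLM (𝕜 := ℂ) B))
  have := ENNReal.toReal_mono hfin h1
  simpa using this

lemma toCLM_coord {𝕜 : Type*} [RCLike 𝕜] {p : ℕ} (M : Matrix (Fin p) (Fin p) 𝕜)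
    (x : EuclideanSpace 𝕜 (Fin p)) (j : Fin p) :
    (Matrix.toEuclideanCLM (𝕜 := 𝕜) M x) j = ∑ k, M j k * x k := by
  have h0 : (Matrix.toEuclideanCLM (𝕜 := 𝕜) M x) j
      = Matrix.toLin' M (WithLp.equiv _ _ x) j := rfl
  rw [h0, Matrix.toLin'_apply]
  simp [Matrix.mulVec, dotProduct]

lemma real_norm_le_complex {p : ℕ} (M : Matrix (Fin p) (Fin p) ℝ) :
    ‖Matrix.toEuclideanCLM (𝕜 := ℝ) M‖
      ≤ ‖Matrix.toEuclideanCLM (𝕜 := ℂ) (M.map (algebraMap ℝ ℂ))‖ := by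
  refine ContinuousLinearMap.opNorm_le_bound _ (norm_nonneg _) fun x => ?_
  set B := M.map (algebraMap ℝ ℂ) with hB
  set z : EuclideanSpace ℂ (Fin p) := (WithLp.equiv 2 _).symm (fun j => ((x j : ℝ) : ℂ)) with hzd
  have hzc : ∀ j, z j = ((x j : ℝ) : ℂ) := fun j => rfl
  have hznorm : ‖z‖ = ‖x‖ := by
    rw [EuclideanSpace.norm_eq, EuclideanSpace.norm_eq]
    congr 1
    refine Finset.sum_congr rfl fun j _ => ?_
    rw [hzc j, Complex.norm_real]
  have hcoord : ∀ j, (Matrix.toEuclideanCLM (𝕜 := ℂ) B z) j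
      = ((Matrix.toEuclideanCLM (𝕜 := ℝ) M x) j : ℂ) := by
    intro j
    rw [toCLM_coord, toCLM_coord]
    push_cast
    refine Finset.sum_congr rfl fun k _ => ?_
    rw [hzc k, hB]
    simp [Matrix.map_apply]
  have hnorm_eq : ‖Matrix.toEuclideanCLM (𝕜 := ℝ) M x‖ = ‖Matrix.toEuclideanCLM (𝕜 := ℂ) B z‖ := by
    rw [EuclideanSpace.norm_eq, EuclideanSpace.norm_eq]
    congr 1
    refine Finset.sum_congr rfl fun j _ => ?_
    rw [hcoord j, Complex.norm_real]
  rw [hnorm_eq, ← hznorm]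
  exact (Matrix.toEuclideanCLM (𝕜 := ℂ) B).le_opNorm z

lemma complex_norm_le_real {p : ℕ} (M : Matrix (Fin p) (Fin p) ℝ) :
    ‖Matrix.toEuclideanCLM (𝕜 := ℂ) (M.map (algebraMap ℝ ℂ))‖
      ≤ ‖Matrix.toEuclideanCLM (𝕜 := ℝ) M‖ := by
  refine ContinuousLinearMap.opNorm_le_bound _ (norm_nonneg _) fun z => ?_
  set B := M.map (algebraMap ℝ ℂ) with hB
  set a := ‖Matrix.toEuclideanCLM (𝕜 := ℝ) M‖ with ha
  set xr : EuclideanSpace ℝ (Fin p) := (WithLp.equiv 2 _).symm (fun j => (z j).re) with hxr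
  set xi : EuclideanSpace ℝ (Fin p) := (WithLp.equiv 2 _).symm (fun j => (z j).im) with hxi
  have hxrc : ∀ j, xr j = (z j).re := fun j => rfl
  have hxic : ∀ j, xi j = (z j).im := fun j => rfl
  have hre : ∀ j, ((Matrix.toEuclideanCLM (𝕜 := ℂ) B z) j).re
      = (Matrix.toEuclideanCLM (𝕜 := ℝ) M xr) j := by
    intro j
    rw [toCLM_coord, toCLM_coord, Complex.re_sum]
    refine Finset.sum_congr rfl fun k _ => ?_
    rw [hB, hxrc]
    simp [Matrix.map_apply, Complex.mul_re]
  have him : ∀ j, ((Matrix.toEuclideanCLM (𝕜 := ℂ) B z) j).im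
      = (Matrix.toEuclideanCLM (𝕜 := ℝ) M xi) j := by
    intro j
    rw [toCLM_coord, toCLM_coord, Complex.im_sum]
    refine Finset.sum_congr rfl fun k _ => ?_
    rw [hB, hxic]
    simp [Matrix.map_apply, Complex.mul_im]
  have hsq : ∀ w : ℂ, ‖w‖ ^ 2 = w.re ^ 2 + w.im ^ 2 := by
    intro w
    rw [Complex.sq_norm, Complex.normSq_apply]; ring
  have hzsplit : ‖z‖ ^ 2 = ‖xr‖ ^ 2 + ‖xi‖ ^ 2 := by
    rw [EuclideanSpace.norm_eq, EuclideanSpace.norm_eq, EuclideanSpace.norm_eq,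
      Real.sq_sqrt (by positivity), Real.sq_sqrt (by positivity), Real.sq_sqrt (by positivity),
      ← Finset.sum_add_distrib]
    refine Finset.sum_congr rfl fun j _ => ?_
    rw [hsq, hxrc, hxic]
    simp [Real.norm_eq_abs, sq_abs]
  refine euclid_norm_le_of_sq _ (a * ‖z‖) (mul_nonneg (norm_nonneg _) (norm_nonneg _)) ?_
  have hMr := (Matrix.toEuclideanCLM (𝕜 := ℝ) M).le_opNorm xr
  have hMi := (Matrix.toEuclideanCLM (𝕜 := ℝ) M).le_opNorm xi
  have hMrsq : ‖Matrix.toEuclideanCLM (𝕜 := ℝ) M xr‖ ^ 2 ≤ a ^ 2 * ‖xr‖ ^ 2 := by nlinarith [norm_nonneg (Matrix.toEuclideanCLM (𝕜 := ℝ) M xr), norm_nonneg xr, norm_nonneg (Matrix.toEuclideanCLM (𝕜 := ℝ) M)]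
  have hMisq : ‖Matrix.toEuclideanCLM (𝕜 := ℝ) M xi‖ ^ 2 ≤ a ^ 2 * ‖xi‖ ^ 2 := by nlinarith [norm_nonneg (Matrix.toEuclideanCLM (𝕜 := ℝ) M xi), norm_nonneg xi, norm_nonneg (Matrix.toEuclideanCLM (𝕜 := ℝ) M)]
  have hexp : ∀ v : EuclideanSpace ℝ (Fin p), ‖v‖ ^ 2 = ∑ j, ‖v j‖ ^ 2 := by
    intro v
    rw [EuclideanSpace.norm_eq, Real.sq_sqrt (by positivity)]
  calc ∑ j, ‖(Matrix.toEuclideanCLM (𝕜 := ℂ) B z) j‖ ^ 2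
      = ∑ j, (‖(Matrix.toEuclideanCLM (𝕜 := ℝ) M xr) j‖ ^ 2
          + ‖(Matrix.toEuclideanCLM (𝕜 := ℝ) M xi) j‖ ^ 2) := by
        refine Finset.sum_congr rfl fun j _ => ?_
        rw [hsq, hre, him]
        simp [Real.norm_eq_abs, sq_abs]
  _ = ‖Matrix.toEuclideanCLM (𝕜 := ℝ) M xr‖ ^ 2 + ‖Matrix.toEuclideanCLM (𝕜 := ℝ) M xi‖ ^ 2 := by
        rw [Finset.sum_add_distrib, hexp, hexp]
  _ ≤ a ^ 2 * ‖xr‖ ^ 2 + a ^ 2 * ‖xi‖ ^ 2 := add_le_add hMrsq hMisq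
  _ = a ^ 2 * (‖xr‖ ^ 2 + ‖xi‖ ^ 2) := by ring
  _ = (a * ‖z‖) ^ 2 := by rw [← hzsplit]; ring

end SchurAux

lemma conj_pow_aux {M : Type*} [Monoid M] (x y c : M) (h1 : x * y = 1) (h2 : y * x = 1)
    (i : ℕ) : (y * c * x) ^ i = y * c ^ i * x := by
  induction i with
  | zero => rw [pow_zero, pow_zero, mul_one, h2]
  | succ i IH =>
    rw [pow_succ, IH, pow_succ]
    calc y * c ^ i * x * (y * c * x) = y * c ^ i * (x * y) * c * x := by
          simp only [mul_assoc]
    _ = y * (c ^ i * c) * x := by rw [h1, mul_one]; simp only [mul_assoc]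

set_option maxHeartbeats 2000000 in
/-- Lemma A.1 of the paper.
For a real `p × p` matrix `A` with spectral radius `ρ(A)` (computed over the complex
eigenvalues) and spectral norm `‖·‖` (the operator norm induced by the Euclidean norm),
for any `ε > 0` one has `‖A^i‖ ≤ M λ^i` for all `i ≥ 0`, where
`M = (1 + 2/ε)^(p-1) √p` and `λ = ρ(A) + ε ‖A‖`. -/
theorem stmt6 (p : ℕ) (A : Matrix (Fin p) (Fin p) ℝ) (ε : ℝ) (hε : 0 < ε) :
    ∀ i : ℕ,
      ‖Matrix.toEuclideanCLM (𝕜 := ℝ) (A ^ i)‖ ≤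
        ((1 + 2 / ε) ^ (p - 1) * Real.sqrt p) *
          ((spectralRadius ℂ (A.map (algebraMap ℝ ℂ))).toReal +
              ε * ‖Matrix.toEuclideanCLM (𝕜 := ℝ) A‖) ^ i := by
  intro i
  rcases Nat.eq_zero_or_pos p with hp | hp
  · subst hp
    have hx0 : ∀ x : EuclideanSpace ℝ (Fin 0), x = 0 := fun x => PiLp.ext fun j => j.elim0
    have hnorm0 : ‖Matrix.toEuclideanCLM (𝕜 := ℝ) (A ^ i)‖ ≤ 0 := by
      refine ContinuousLinearMap.opNorm_le_bound _ le_rfl fun x => ?_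
      rw [hx0 x]
      simp
    calc ‖Matrix.toEuclideanCLM (𝕜 := ℝ) (A ^ i)‖ ≤ 0 := hnorm0
    _ ≤ _ := by
        rw [Nat.cast_zero, Real.sqrt_zero, mul_zero, zero_mul]
  -- main case
  set a : ℝ := ‖Matrix.toEuclideanCLM (𝕜 := ℝ) A‖ with ha_def
  set B : Matrix (Fin p) (Fin p) ℂ := A.map (algebraMap ℝ ℂ) with hB_def
  set ρ : ℝ := (spectralRadius ℂ B).toReal with hρ_def
  have ha : 0 ≤ a := norm_nonneg _
  have hρ : 0 ≤ ρ := ENNReal.toReal_nonneg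
  set lam : ℝ := ρ + ε * a with hlam_def
  have hlam : 0 ≤ lam := by positivity
  obtain ⟨U, T, hUU, hUU', hTri, hBT, hTBU⟩ := schur_matrix p B
  -- entry bound on T
  have hBnorm : ‖Matrix.toEuclideanCLM (𝕜 := ℂ) B‖ ≤ a := complex_norm_le_real A
  have hUn : ‖Matrix.toEuclideanCLM (𝕜 := ℂ) U‖ ≤ 1 := unitary_norm_le U hUU
  have hUsn : ‖Matrix.toEuclideanCLM (𝕜 := ℂ) (star U)‖ ≤ 1 :=
    unitary_norm_le (star U) (by rwa [star_star])
  have hTnorm : ‖Matrix.toEuclideanCLM (𝕜 := ℂ) T‖ ≤ a := by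
    rw [hTBU, _root_.map_mul, _root_.map_mul]
    calc ‖Matrix.toEuclideanCLM (𝕜 := ℂ) (star U) * Matrix.toEuclideanCLM (𝕜 := ℂ) B
          * Matrix.toEuclideanCLM (𝕜 := ℂ) U‖
        ≤ ‖Matrix.toEuclideanCLM (𝕜 := ℂ) (star U) * Matrix.toEuclideanCLM (𝕜 := ℂ) B‖
          * ‖Matrix.toEuclideanCLM (𝕜 := ℂ) U‖ := norm_mul_le _ _
    _ ≤ (‖Matrix.toEuclideanCLM (𝕜 := ℂ) (star U)‖ * ‖Matrix.toEuclideanCLM (𝕜 := ℂ) B‖)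
          * ‖Matrix.toEuclideanCLM (𝕜 := ℂ) U‖ := by
        refine mul_le_mul_of_nonneg_right (norm_mul_le _ _) (norm_nonneg _)
    _ ≤ (1 * a) * 1 := by
        refine mul_le_mul (mul_le_mul hUsn hBnorm (norm_nonneg _) zero_le_one) hUn
          (norm_nonneg _) (by positivity)
    _ = a := by ring
  have hTa : ∀ j k : Fin p, ‖T j k‖ ≤ a := fun j k => (entry_le_norm T j k).trans hTnorm
  have hTρ : ∀ j : Fin p, ‖T j j‖ ≤ ρ := fun j =>
    diag_le_spectralRadius B U T hp hUU' hBT hTri j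
  -- scaling
  set t : ℝ := 1 + 1 / ε with ht_def
  have ht1 : 1 < t := by
    have h01 : 0 < 1 / ε := by positivity
    rw [ht_def]
    linarith
  have ht0 : 0 < t := lt_trans zero_lt_one ht1
  have htC : ∀ n : ℕ, ((t : ℂ)) ^ n ≠ 0 := fun n => pow_ne_zero n (by
    simp only [ne_eq, Complex.ofReal_eq_zero]; exact ne_of_gt ht0)
  set S : Matrix (Fin p) (Fin p) ℂ := Matrix.diagonal (fun j : Fin p => (t : ℂ) ^ (j : ℕ))
    with hS_def
  set S' : Matrix (Fin p) (Fin p) ℂ := Matrix.diagonal (fun j : Fin p => ((t : ℂ) ^ (j : ℕ))⁻¹)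
    with hS'_def
  have hSS' : S * S' = 1 := by
    rw [hS_def, hS'_def, Matrix.diagonal_mul_diagonal]
    rw [show (fun i : Fin p => (t : ℂ) ^ (i : ℕ) * ((t : ℂ) ^ (i : ℕ))⁻¹)
      = fun _ : Fin p => (1 : ℂ) from funext fun i => mul_inv_cancel₀ (htC _)]
    exact Matrix.diagonal_one
  have hS'S : S' * S = 1 := by
    rw [hS'_def, hS_def, Matrix.diagonal_mul_diagonal]
    rw [show (fun i : Fin p => ((t : ℂ) ^ (i : ℕ))⁻¹ * (t : ℂ) ^ (i : ℕ))
      = fun _ : Fin p => (1 : ℂ) from funext fun i => inv_mul_cancel₀ (htC _)]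
    exact Matrix.diagonal_one
  set C : Matrix (Fin p) (Fin p) ℂ := S * T * S' with hC_def
  have hTC : T = S' * C * S := by
    rw [hC_def]
    calc T = (S' * S) * T * (S' * S) := by rw [hS'S, Matrix.one_mul, Matrix.mul_one]
    _ = S' * (S * T * S') * S := by noncomm_ring
  have hCentry : ∀ j k : Fin p, C j k = (t : ℂ) ^ (j : ℕ) * T j k * ((t : ℂ) ^ (k : ℕ))⁻¹ := by
    intro j k
    rw [hC_def, Matrix.mul_diagonal, Matrix.diagonal_mul]
  -- band decomposition
  set Cm : ℕ → Matrix (Fin p) (Fin p) ℂ :=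
    fun m => Matrix.of fun j k => if (k : ℕ) = (j : ℕ) + m then C j k else 0 with hCm_def
  have hCmapp : ∀ (m : ℕ) (j k : Fin p),
      Cm m j k = if (k : ℕ) = (j : ℕ) + m then C j k else 0 := fun m j k => rfl
  have hCsum : C = ∑ m ∈ Finset.range p, Cm m := by
    ext j k
    rw [Matrix.sum_apply]
    by_cases h : (k : ℕ) < (j : ℕ)
    · rw [Finset.sum_eq_zero (fun m _ => by rw [hCmapp]; exact if_neg (by omega))]
      rw [hCentry, hTri j k h, mul_zero, zero_mul]
    · rw [Finset.sum_eq_single_of_mem ((k : ℕ) - (j : ℕ))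
        (Finset.mem_range.mpr (by omega))
        (fun m _ hm => by rw [hCmapp]; exact if_neg (by omega)), hCmapp]
      exact (if_pos (by omega)).symm
  -- norms of bands
  have hC0 : ‖Matrix.toEuclideanCLM (𝕜 := ℂ) (Cm 0)‖ ≤ ρ := by
    refine band_norm_le 0 _ ρ hρ (fun j k h => ?_) (fun j k => ?_)
    · by_contra hne
      exact h (by rw [hCmapp]; exact if_neg (by omega))
    · rw [hCmapp]
      by_cases h : (k : ℕ) = (j : ℕ) + 0
      · have hkj : k = j := Fin.ext (by omega)
        rw [if_pos h, hkj, hCentry, mul_comm ((t : ℂ) ^ (j : ℕ)) (T j j), mul_assoc,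
          mul_inv_cancel₀ (htC _), mul_one]
        exact hTρ j
      · rw [if_neg h, norm_zero]
        exact hρ
  have hCmb : ∀ m : ℕ, 1 ≤ m → ‖Matrix.toEuclideanCLM (𝕜 := ℂ) (Cm m)‖ ≤ (1 / t) ^ m * a := by
    intro m hm
    refine band_norm_le m _ _ (by positivity) (fun j k h => ?_) (fun j k => ?_)
    · by_contra hne
      exact h (by rw [hCmapp]; exact if_neg hne)
    · rw [hCmapp]
      by_cases h : (k : ℕ) = (j : ℕ) + m
      · rw [if_pos h, hCentry, norm_mul, norm_mul, norm_pow, norm_inv, norm_pow,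
          Complex.norm_real, Real.norm_eq_abs, abs_of_pos ht0]
        have harith : t ^ (j : ℕ) * (t ^ (k : ℕ))⁻¹ = (1 / t) ^ m := by
          rw [h, pow_add]
          field_simp
          rw [← mul_pow, mul_one_div_cancel (ne_of_gt ht0), one_pow]
        calc t ^ (j : ℕ) * ‖T j k‖ * (t ^ (k : ℕ))⁻¹
            = (t ^ (j : ℕ) * (t ^ (k : ℕ))⁻¹) * ‖T j k‖ := by ring
        _ = (1 / t) ^ m * ‖T j k‖ := by rw [harith]
        _ ≤ (1 / t) ^ m * a := by
            refine mul_le_mul_of_nonneg_left (hTa j k) (by positivity)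
      · rw [if_neg h, norm_zero]
        positivity
  -- geometric series
  set r : ℝ := 1 / t with hr_def
  have hr0 : 0 ≤ r := by positivity
  have hr1 : r < 1 := by
    rw [hr_def, div_lt_one ht0]; exact ht1
  have hgeom : ∀ q : ℕ, ∑ m ∈ Finset.range q, r ^ (m + 1) ≤ ε := by
    intro q
    have h1 : ∑ m ∈ Finset.range q, r ^ (m + 1) = r * ∑ m ∈ Finset.range q, r ^ m := by
      rw [Finset.mul_sum]
      exact Finset.sum_congr rfl fun m _ => by rw [pow_succ']
    have h2 : ∑ m ∈ Finset.range q, r ^ m ≤ 1 / (1 - r) := by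
      rw [geom_sum_eq (ne_of_lt hr1) q]
      rw [show (r ^ q - 1) / (r - 1) = (1 - r ^ q) / (1 - r) from by
        rw [← neg_sub 1 (r ^ q), ← neg_sub 1 r, neg_div_neg_eq]]
      gcongr
      · have : 0 ≤ r ^ q := by positivity
        linarith
    have h3 : r * (1 / (1 - r)) = ε := by
      have htne : t ≠ 0 := ne_of_gt ht0
      have h1r : 1 - r = (t - 1) / t := by rw [hr_def]; field_simp
      have ht1' : t - 1 = 1 / ε := by rw [ht_def]; ring
      rw [h1r, ht1', hr_def, ht_def]
      field_simp
    calc ∑ m ∈ Finset.range q, r ^ (m + 1) = r * ∑ m ∈ Finset.range q, r ^ m := h1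
    _ ≤ r * (1 / (1 - r)) := by
        refine mul_le_mul_of_nonneg_left h2 hr0
    _ = ε := h3
  -- norm of C
  have hCnorm : ‖Matrix.toEuclideanCLM (𝕜 := ℂ) C‖ ≤ lam := by
    rw [hCsum, map_sum]
    calc ‖∑ m ∈ Finset.range p, Matrix.toEuclideanCLM (𝕜 := ℂ) (Cm m)‖
        ≤ ∑ m ∈ Finset.range p, ‖Matrix.toEuclideanCLM (𝕜 := ℂ) (Cm m)‖ :=
          norm_sum_le _ _
    _ ≤ lam := by
        obtain ⟨q, hq⟩ : ∃ q, p = q + 1 := ⟨p - 1, by omega⟩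
        rw [show Finset.range p = Finset.range (q + 1) from by rw [hq],
          Finset.sum_range_succ']
        have hbound : ∑ m ∈ Finset.range q, ‖Matrix.toEuclideanCLM (𝕜 := ℂ) (Cm (m + 1))‖
            ≤ ∑ m ∈ Finset.range q, r ^ (m + 1) * a := by
          refine Finset.sum_le_sum fun m _ => ?_
          exact hCmb (m + 1) (by omega)
        have hsum2 : ∑ m ∈ Finset.range q, r ^ (m + 1) * a ≤ ε * a := by
          rw [← Finset.sum_mul]
          exact mul_le_mul_of_nonneg_right (hgeom q) ha
        have := hC0
        rw [hlam_def]
        linarith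
  -- powers
  have hTi : T ^ i = S' * C ^ i * S := by
    rw [hTC]
    exact conj_pow_aux S S' C hSS' hS'S i
  have hBi : B ^ i = U * T ^ i * star U := by
    rw [hBT]
    exact conj_pow_aux (star U) U T hUU hUU' i
  -- norms of S, S'
  have hSnorm : ‖Matrix.toEuclideanCLM (𝕜 := ℂ) S‖ ≤ t ^ (p - 1) := by
    refine band_norm_le 0 _ _ (by positivity) (fun j k h => ?_) (fun j k => ?_)
    · by_contra hne
      exact h (Matrix.diagonal_apply_ne _ (fun hc => hne (by rw [hc]; omega)))
    · by_cases h : j = k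
      · subst h
        rw [hS_def, Matrix.diagonal_apply_eq, norm_pow, Complex.norm_real, Real.norm_eq_abs,
          abs_of_pos ht0]
        exact pow_le_pow_right₀ (le_of_lt ht1) (by omega)
      · rw [hS_def, Matrix.diagonal_apply_ne _ h, norm_zero]
        positivity
  have hS'norm : ‖Matrix.toEuclideanCLM (𝕜 := ℂ) S'‖ ≤ 1 := by
    refine band_norm_le 0 _ _ zero_le_one (fun j k h => ?_) (fun j k => ?_)
    · by_contra hne
      exact h (Matrix.diagonal_apply_ne _ (fun hc => hne (by rw [hc]; omega)))
    · by_cases h : j = k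
      · subst h
        rw [hS'_def, Matrix.diagonal_apply_eq, norm_inv, norm_pow, Complex.norm_real,
          Real.norm_eq_abs, abs_of_pos ht0]
        rw [inv_le_one_iff₀]
        right
        exact one_le_pow₀ (le_of_lt ht1)
      · rw [hS'_def, Matrix.diagonal_apply_ne _ h, norm_zero]
        exact zero_le_one
  have hCi : ∀ n : ℕ, ‖Matrix.toEuclideanCLM (𝕜 := ℂ) (C ^ n)‖ ≤ lam ^ n := by
    intro n
    induction n with
    | zero =>
      rw [pow_zero, pow_zero, _root_.map_one]
      exact ContinuousLinearMap.norm_id_le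
    | succ n IH =>
      rw [pow_succ, pow_succ, _root_.map_mul]
      calc ‖Matrix.toEuclideanCLM (𝕜 := ℂ) (C ^ n) * Matrix.toEuclideanCLM (𝕜 := ℂ) C‖
          ≤ ‖Matrix.toEuclideanCLM (𝕜 := ℂ) (C ^ n)‖ * ‖Matrix.toEuclideanCLM (𝕜 := ℂ) C‖ :=
            norm_mul_le _ _
      _ ≤ lam ^ n * lam := mul_le_mul IH hCnorm (norm_nonneg _) (by positivity)
  have hTin : ‖Matrix.toEuclideanCLM (𝕜 := ℂ) (T ^ i)‖ ≤ t ^ (p - 1) * lam ^ i := by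
    rw [hTi, _root_.map_mul, _root_.map_mul]
    calc ‖Matrix.toEuclideanCLM (𝕜 := ℂ) S' * Matrix.toEuclideanCLM (𝕜 := ℂ) (C ^ i)
          * Matrix.toEuclideanCLM (𝕜 := ℂ) S‖
        ≤ ‖Matrix.toEuclideanCLM (𝕜 := ℂ) S' * Matrix.toEuclideanCLM (𝕜 := ℂ) (C ^ i)‖
          * ‖Matrix.toEuclideanCLM (𝕜 := ℂ) S‖ := norm_mul_le _ _
    _ ≤ (‖Matrix.toEuclideanCLM (𝕜 := ℂ) S'‖ * ‖Matrix.toEuclideanCLM (𝕜 := ℂ) (C ^ i)‖)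
          * ‖Matrix.toEuclideanCLM (𝕜 := ℂ) S‖ :=
        mul_le_mul_of_nonneg_right (norm_mul_le _ _) (norm_nonneg _)
    _ ≤ (1 * lam ^ i) * t ^ (p - 1) := by
        refine mul_le_mul (mul_le_mul hS'norm (hCi i) (norm_nonneg _) zero_le_one) hSnorm
          (norm_nonneg _) (by positivity)
    _ = t ^ (p - 1) * lam ^ i := by ring
  have hBin : ‖Matrix.toEuclideanCLM (𝕜 := ℂ) (B ^ i)‖ ≤ t ^ (p - 1) * lam ^ i := by
    rw [hBi, _root_.map_mul, _root_.map_mul]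
    calc ‖Matrix.toEuclideanCLM (𝕜 := ℂ) U * Matrix.toEuclideanCLM (𝕜 := ℂ) (T ^ i)
          * Matrix.toEuclideanCLM (𝕜 := ℂ) (star U)‖
        ≤ ‖Matrix.toEuclideanCLM (𝕜 := ℂ) U * Matrix.toEuclideanCLM (𝕜 := ℂ) (T ^ i)‖
          * ‖Matrix.toEuclideanCLM (𝕜 := ℂ) (star U)‖ := norm_mul_le _ _
    _ ≤ (‖Matrix.toEuclideanCLM (𝕜 := ℂ) U‖ * ‖Matrix.toEuclideanCLM (𝕜 := ℂ) (T ^ i)‖)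
          * ‖Matrix.toEuclideanCLM (𝕜 := ℂ) (star U)‖ :=
        mul_le_mul_of_nonneg_right (norm_mul_le _ _) (norm_nonneg _)
    _ ≤ (1 * (t ^ (p - 1) * lam ^ i)) * 1 := by
        refine mul_le_mul (mul_le_mul hUn hTin (norm_nonneg _) zero_le_one) hUsn
          (norm_nonneg _) (by positivity)
    _ = t ^ (p - 1) * lam ^ i := by ring
  have hmap : (A ^ i).map (algebraMap ℝ ℂ) = B ^ i := by
    rw [hB_def, ← RingHom.mapMatrix_apply, ← RingHom.mapMatrix_apply, map_pow]
  have hfinal1 : ‖Matrix.toEuclideanCLM (𝕜 := ℝ) (A ^ i)‖ ≤ t ^ (p - 1) * lam ^ i :=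
    le_trans (real_norm_le_complex (A ^ i)) (by rw [hmap]; exact hBin)
  refine le_trans hfinal1 ?_
  have hM : t ^ (p - 1) ≤ (1 + 2 / ε) ^ (p - 1) * Real.sqrt p := by
    have h1 : t ^ (p - 1) ≤ (1 + 2 / ε) ^ (p - 1) := by
      refine pow_le_pow_left₀ (le_of_lt ht0) ?_ _
      rw [ht_def]
      have : 1 / ε ≤ 2 / ε := (div_le_div_iff_of_pos_right hε).mpr one_le_two
      linarith
    have h2 : 1 ≤ Real.sqrt p := by
      rw [Real.one_le_sqrt]
      exact_mod_cast hp
    calc t ^ (p - 1) ≤ (1 + 2 / ε) ^ (p - 1) := h1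
    _ = (1 + 2 / ε) ^ (p - 1) * 1 := by ring
    _ ≤ (1 + 2 / ε) ^ (p - 1) * Real.sqrt p := by
        refine mul_le_mul_of_nonneg_left h2 ?_
        positivity
  exact mul_le_mul_of_nonneg_right hM (by positivity)
end

section
/- Let f_1, …, f_n be vectors in ℝ^p and define M_k = I + ∑_{j=1}^{k} f_j f_jᵀ for 1 ≤ k ≤ n (M_0 = I). Then ∑_{k=1}^{n} f_kᵀ M_k^{-1} f_k ≤ log det(M_n); in particular the left-hand side is O(log⁺ det(M_n) + 1). -/
open Matrix

lemma vecMulVec_mulVec' {p : ℕ} (u v w : Fin p → ℝ) :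
    Matrix.vecMulVec u v *ᵥ w = (v ⬝ᵥ w) • u := by
  ext i
  simp [Matrix.mulVec, dotProduct, Matrix.vecMulVec_apply, Finset.mul_sum,
    Finset.sum_mul, mul_comm, mul_assoc, mul_left_comm]

lemma posSemidef_vecMulVec' {p : ℕ} (v : Fin p → ℝ) :
    (Matrix.vecMulVec v v).PosSemidef := by
  rw [Matrix.posSemidef_iff_dotProduct_mulVec]
  constructor
  · ext i j
    simp [Matrix.conjTranspose_apply, Matrix.vecMulVec_apply, mul_comm]
  · intro x
    rw [star_trivial, vecMulVec_mulVec']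
    simp only [dotProduct_smul, smul_eq_mul]
    have : v ⬝ᵥ x = x ⬝ᵥ v := dotProduct_comm v x
    rw [this]
    exact mul_self_nonneg _

lemma detIdentity {p : ℕ} (A : Matrix (Fin p) (Fin p) ℝ) (hA : IsUnit A.det)
    (u : Fin p → ℝ) :
    (A + Matrix.vecMulVec u u).det = A.det * (1 + u ⬝ᵥ A⁻¹ *ᵥ u) := by
  rw [Matrix.vecMulVec_eq Unit, Matrix.det_add_replicateCol_mul_replicateRow hA]
  congr 1
  rw [Matrix.det_unique]
  simp only [Matrix.add_apply, Matrix.one_apply_eq]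
  congr 1
  simp only [Matrix.mul_apply, Matrix.replicateRow_apply, Matrix.replicateCol_apply, dotProduct,
    Matrix.mulVec, Finset.sum_mul, Finset.mul_sum]
  rw [Finset.sum_comm]
  exact Finset.sum_congr rfl fun i _ => Finset.sum_congr rfl fun j _ => by ring

lemma invVec {p : ℕ} (A : Matrix (Fin p) (Fin p) ℝ) (hA : IsUnit A.det) (u : Fin p → ℝ)
    (hB : IsUnit (A + Matrix.vecMulVec u u).det)
    (hx : 1 + u ⬝ᵥ A⁻¹ *ᵥ u ≠ 0) :
    (A + Matrix.vecMulVec u u)⁻¹ *ᵥ u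
      = (1 + u ⬝ᵥ A⁻¹ *ᵥ u)⁻¹ • (A⁻¹ *ᵥ u) := by
  set x : ℝ := u ⬝ᵥ A⁻¹ *ᵥ u with hxdef
  set B := A + Matrix.vecMulVec u u with hBdef
  have key : B *ᵥ ((1 + x)⁻¹ • (A⁻¹ *ᵥ u)) = u := by
    rw [Matrix.mulVec_smul, hBdef, Matrix.add_mulVec, vecMulVec_mulVec',
      Matrix.mulVec_mulVec, Matrix.mul_nonsing_inv A hA]
    rw [Matrix.one_mulVec, ← hxdef]
    rw [show u + x • u = (1 + x) • u by rw [add_smul, one_smul], inv_smul_smul₀ hx]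
  calc B⁻¹ *ᵥ u = B⁻¹ *ᵥ (B *ᵥ ((1 + x)⁻¹ • (A⁻¹ *ᵥ u))) := by rw [key]
    _ = (1 + x)⁻¹ • (A⁻¹ *ᵥ u) := by
        rw [Matrix.mulVec_mulVec, Matrix.nonsing_inv_mul B hB, Matrix.one_mulVec]

/-- Lemma A.2 of the paper, deterministic form.
For vectors `f_1, …, f_n` in `ℝ^p` and `M_k = I + ∑_{j=1}^k f_j f_jᵀ`, one has
`∑_{k=1}^n f_kᵀ M_k⁻¹ f_k ≤ log det M_n`. -/
theorem stmt7 (p n : ℕ) (f : ℕ → Fin p → ℝ)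
    (M : ℕ → Matrix (Fin p) (Fin p) ℝ)
    (hM : ∀ k, M k = 1 + ∑ j ∈ Finset.Icc 1 k, Matrix.vecMulVec (f j) (f j)) :
    ∑ k ∈ Finset.Icc 1 n, f k ⬝ᵥ (M k)⁻¹.mulVec (f k) ≤ Real.log (M n).det := by
  have hPD : ∀ k, (M k).PosDef := by
    intro k
    rw [hM k]
    refine Matrix.PosDef.add_posSemidef Matrix.PosDef.one ?_
    refine Finset.sum_induction _ _ (fun a b ha hb => ha.add hb)
      Matrix.PosSemidef.zero (fun j _ => posSemidef_vecMulVec' (f j))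
  induction n with
  | zero =>
      simp only [Finset.Icc_eq_empty_of_lt Nat.zero_lt_one, Finset.sum_empty]
      rw [hM 0]
      simp
  | succ n ih =>
      have hstep : M (n + 1) = M n + Matrix.vecMulVec (f (n + 1)) (f (n + 1)) := by
        rw [hM (n + 1), hM n, Finset.sum_Icc_succ_top (Nat.succ_le_succ (Nat.zero_le n))]
        abel
      set u := f (n + 1) with hu
      set x : ℝ := u ⬝ᵥ (M n)⁻¹ *ᵥ u with hxdef
      have hx0 : 0 ≤ x := by
        have := (Matrix.posSemidef_iff_dotProduct_mulVec.mp ((hPD n).inv).posSemidef).2 u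
        rwa [star_trivial] at this
      have hx1 : (0 : ℝ) < 1 + x := by linarith
      have hdetA : 0 < (M n).det := (hPD n).det_pos
      have hdetB : 0 < (M (n+1)).det := (hPD (n+1)).det_pos
      have hdet : (M (n+1)).det = (M n).det * (1 + x) := by
        rw [hstep, detIdentity (M n) (isUnit_iff_ne_zero.mpr hdetA.ne') u]
      have hterm : u ⬝ᵥ (M (n+1))⁻¹ *ᵥ u = (1 + x)⁻¹ * x := by
        have hBunit : IsUnit (M n + Matrix.vecMulVec u u).det := by
          rw [← hstep]; exact (isUnit_iff_ne_zero.mpr hdetB.ne')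
        rw [hstep, invVec (M n) (isUnit_iff_ne_zero.mpr hdetA.ne') u hBunit hx1.ne']
        rw [dotProduct_smul, smul_eq_mul, ← hxdef]
      rw [Finset.sum_Icc_succ_top (Nat.succ_le_succ (Nat.zero_le n))]
      have hlog : Real.log (M (n+1)).det = Real.log (M n).det + Real.log (1 + x) := by
        rw [hdet, Real.log_mul hdetA.ne' hx1.ne']
      rw [hlog]
      have h1 : u ⬝ᵥ (M (n+1))⁻¹ *ᵥ u ≤ Real.log (1 + x) := by
        rw [hterm]
        have := Real.one_sub_inv_le_log_of_pos hx1
        have heq : (1 + x)⁻¹ * x = 1 - (1 + x)⁻¹ := by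
          field_simp
          ring
        linarith [heq ▸ this]
      have := ih
      linarith [h1, ih]
end

section
/- Let {G_i}_{i≥1} be real numbers with |G_i| ≤ K e^{−r i} for constants K > 0, r > 0, and let {u_k} be a real sequence with u_k = 0 for k < 0 and |u_k| ≤ K'(k+1)^{1+δ} for some constants K' > 0, δ > 0. Fix a > 1 and set p_k = ⌊(log k)^a⌋. Then the ARX(∞) truncation errors δ_k = ∑_{i=p_k+1}^{∞} G_i u_{k−i+1} satisfy ∑_{k=1}^{∞} δ_k² < ∞; in particular ∑_{k=1}^{n} δ_k² = O(1) as n → ∞. -/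
open Filter

/-- Key eventual inequality: for any `B` and `r > 0`, `a > 1`,
eventually `B * log(k+2) ≤ r * ⌊(log k)^a⌋`. -/
lemma key_ev (B r a : ℝ) (hr : 0 < r) (ha : 1 < a) (pn : ℕ → ℕ)
    (hpn : ∀ k, pn k = ⌊Real.log k ^ a⌋₊) :
    ∀ᶠ k : ℕ in atTop, B * Real.log ((k : ℝ) + 2) ≤ r * (pn k : ℝ) := by
  set M : ℝ := (2 * |B| + 2 * r) / r with hM
  have hlog : Tendsto (fun k : ℕ => Real.log (k : ℝ)) atTop atTop :=
    Real.tendsto_log_atTop.comp tendsto_natCast_atTop_atTop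
  have h1 : ∀ᶠ k : ℕ in atTop, (1 : ℝ) ≤ Real.log (k : ℝ) := hlog.eventually_ge_atTop 1
  have h2 : ∀ᶠ k : ℕ in atTop, M ≤ Real.log (k : ℝ) ^ (a - 1) :=
    ((tendsto_rpow_atTop (by linarith : (0:ℝ) < a - 1)).comp hlog).eventually_ge_atTop M
  have h4 : ∀ᶠ k : ℕ in atTop, Real.log ((k : ℝ) + 2) ≤ 2 * Real.log (k : ℝ) := by
    filter_upwards [eventually_ge_atTop 2] with k hk
    have hk2 : (2 : ℝ) ≤ (k : ℝ) := by exact_mod_cast hk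
    have h : (k : ℝ) + 2 ≤ (k : ℝ) ^ 2 := by nlinarith
    calc Real.log ((k : ℝ) + 2) ≤ Real.log ((k : ℝ) ^ 2) :=
          Real.log_le_log (by positivity) h
      _ = 2 * Real.log (k : ℝ) := by
          rw [Real.log_pow]; push_cast; ring
  filter_upwards [h1, h2, h4] with k hL hM' hlog2
  set L := Real.log (k : ℝ) with hLdef
  have hL0 : 0 < L := lt_of_lt_of_le one_pos hL
  have hpow : L ^ a = L ^ (a - 1) * L := by
    calc L ^ a = L ^ ((a - 1) + 1) := by norm_num
      _ = L ^ (a - 1) * L ^ (1 : ℝ) := Real.rpow_add hL0 _ _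
      _ = L ^ (a - 1) * L := by rw [Real.rpow_one]
  have hfloor : L ^ a - 1 < (pn k : ℝ) := by
    rw [hpn k]; exact Nat.sub_one_lt_floor _
  have hML : M * L ≤ L ^ (a - 1) * L :=
    mul_le_mul_of_nonneg_right hM' hL0.le
  -- r * pn k ≥ r*(M*L - 1) = (2|B|+2r)L - r ≥ 2|B|L + r
  have h5 : r * (M * L - 1) ≤ r * (pn k : ℝ) := by
    have h5a : M * L - 1 ≤ (pn k : ℝ) := by
      have := hpow ▸ hfloor
      nlinarith
    nlinarith
  have h6 : B * Real.log ((k : ℝ) + 2) ≤ 2 * |B| * L := by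
    have hB : B ≤ |B| := le_abs_self B
    have hlogpos : 0 ≤ Real.log ((k : ℝ) + 2) := by
      have h0 : (0 : ℝ) ≤ (k : ℝ) := Nat.cast_nonneg k
      exact Real.log_nonneg (by linarith)
    calc B * Real.log ((k : ℝ) + 2) ≤ |B| * Real.log ((k : ℝ) + 2) :=
          mul_le_mul_of_nonneg_right hB hlogpos
      _ ≤ |B| * (2 * L) := mul_le_mul_of_nonneg_left hlog2 (abs_nonneg B)
      _ = 2 * |B| * L := by ring
  have h7 : r * (M * L) = (2 * |B| + 2 * r) * L := by
    rw [hM]; field_simp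
  nlinarith [abs_nonneg B]

/-- square-summability of the ARX(∞) truncation errors.
If `|G_i| ≤ K e^{−r i}`, `u_k = 0` for `k < 0`, `|u_k| ≤ K'(k+1)^{1+δ}`, and
`p_k = ⌊(log k)^a⌋` with `a > 1`, then the truncation errors
`δ_k = ∑_{i=p_k+1}^∞ G_i u_{k−i+1}` satisfy `∑_{k=1}^∞ δ_k² < ∞`; in particular the
partial sums `∑_{k=1}^n δ_k²` are `O(1)`. -/
theorem stmt14 (G : ℕ → ℝ) (K r : ℝ) (hK : 0 < K) (hr : 0 < r)
    (hG : ∀ i : ℕ, 1 ≤ i → |G i| ≤ K * Real.exp (-(r * i)))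
    (u : ℕ → ℝ) (K' δ : ℝ) (hK' : 0 < K') (hδ : 0 < δ)
    (hu : ∀ k : ℕ, |u k| ≤ K' * ((k : ℝ) + 1) ^ (1 + δ))
    (a : ℝ) (ha : 1 < a) (pn : ℕ → ℕ) (hpn : ∀ k, pn k = ⌊Real.log k ^ a⌋₊)
    (δk : ℕ → ℝ)
    (hδk : ∀ k : ℕ, δk k = ∑ i ∈ Finset.Icc (pn k + 1) (k + 1), G i * u (k + 1 - i)) :
    (Summable fun k : ℕ => (δk k) ^ 2) ∧
      ∃ C, ∀ n : ℕ, ∑ k ∈ Finset.Icc 1 n, (δk k) ^ 2 ≤ C := by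
  set D : ℕ → ℝ := fun k =>
    K * K' * ((k : ℝ) + 2) * ((k : ℝ) + 2) ^ (1 + δ) * Real.exp (-(r * (pn k : ℝ))) with hD
  have hDnonneg : ∀ k, 0 ≤ D k := by
    intro k; rw [hD]; positivity
  -- Step 1: |δk k| ≤ D k
  have hbound : ∀ k, |δk k| ≤ D k := by
    intro k
    rw [hδk k]
    set b : ℝ := K * Real.exp (-(r * (pn k : ℝ))) * (K' * ((k : ℝ) + 2) ^ (1 + δ)) with hb
    have hb0 : 0 ≤ b := by rw [hb]; positivity
    have hterm : ∀ i ∈ Finset.Icc (pn k + 1) (k + 1), |G i * u (k + 1 - i)| ≤ b := by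
      intro i hi
      rw [Finset.mem_Icc] at hi
      have hi1 : 1 ≤ i := le_trans (Nat.le_add_left 1 (pn k)) hi.1
      have hGi : |G i| ≤ K * Real.exp (-(r * (pn k : ℝ))) := by
        refine le_trans (hG i hi1) ?_
        have hle : -(r * (i : ℝ)) ≤ -(r * (pn k : ℝ)) := by
          have : (pn k : ℝ) ≤ (i : ℝ) := by
            exact_mod_cast le_trans (Nat.le_succ (pn k)) hi.1
          nlinarith
        exact mul_le_mul_of_nonneg_left (Real.exp_le_exp.2 hle) hK.le
      have hui : |u (k + 1 - i)| ≤ K' * ((k : ℝ) + 2) ^ (1 + δ) := by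
        refine le_trans (hu (k + 1 - i)) ?_
        have hle : ((k + 1 - i : ℕ) : ℝ) + 1 ≤ (k : ℝ) + 2 := by
          have h1 : (k + 1 - i : ℕ) ≤ k + 1 := Nat.sub_le _ _
          have h2 := (Nat.cast_le (α := ℝ)).2 h1
          push_cast at h2 ⊢; linarith
        have := Real.rpow_le_rpow (by positivity) hle (by linarith : (0:ℝ) ≤ 1 + δ)
        exact mul_le_mul_of_nonneg_left this hK'.le
      rw [abs_mul]
      exact mul_le_mul hGi hui (abs_nonneg _) (by positivity)
    have hcard : ((Finset.Icc (pn k + 1) (k + 1)).card : ℝ) ≤ (k : ℝ) + 2 := by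
      rw [Nat.card_Icc]
      have : k + 1 + 1 - (pn k + 1) ≤ k + 2 := by omega
      exact_mod_cast this
    calc |∑ i ∈ Finset.Icc (pn k + 1) (k + 1), G i * u (k + 1 - i)|
        ≤ ∑ i ∈ Finset.Icc (pn k + 1) (k + 1), |G i * u (k + 1 - i)| :=
          Finset.abs_sum_le_sum_abs _ _
      _ ≤ ((Finset.Icc (pn k + 1) (k + 1)).card : ℝ) * b := by
          simpa using Finset.sum_le_card_nsmul _ _ b hterm
      _ ≤ ((k : ℝ) + 2) * b := mul_le_mul_of_nonneg_right hcard hb0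
      _ = D k := by rw [hb, hD]; ring
  -- Step 2: eventually D k ≤ 1 / ((k:ℝ)+1)
  have hev : ∀ᶠ k : ℕ in atTop, D k ≤ 1 / ((k : ℝ) + 1) := by
    have hkey := key_ev (4 + δ) r a hr ha pn hpn
    have hKK : ∀ᶠ k : ℕ in atTop, K * K' ≤ (k : ℝ) + 2 := by
      filter_upwards [eventually_ge_atTop ⌈K * K'⌉₊] with k hk
      calc K * K' ≤ (⌈K * K'⌉₊ : ℝ) := Nat.le_ceil _
        _ ≤ (k : ℝ) := by exact_mod_cast hk
        _ ≤ (k : ℝ) + 2 := by linarith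
    filter_upwards [hkey, hKK] with k hkeyk hKKk
    have hk2 : (0 : ℝ) < (k : ℝ) + 2 := by positivity
    have hE : (0 : ℝ) < Real.exp (-(r * (pn k : ℝ))) := Real.exp_pos _
    have hrp : (0 : ℝ) ≤ ((k : ℝ) + 2) ^ (1 + δ) := Real.rpow_nonneg hk2.le _
    -- D k ≤ (k+2)^(3+δ) * exp(-(r pn k))
    have h1 : D k ≤ ((k : ℝ) + 2) ^ ((3 : ℝ) + δ) * Real.exp (-(r * (pn k : ℝ))) := by
      have e1 : ((k : ℝ) + 2) ^ ((3 : ℝ) + δ)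
          = ((k : ℝ) + 2) * ((k : ℝ) + 2) * ((k : ℝ) + 2) ^ (1 + δ) := by
        rw [show (3 : ℝ) + δ = (1 : ℝ) + (1 : ℝ) + (1 + δ) by ring,
          Real.rpow_add hk2, Real.rpow_add hk2, Real.rpow_one]
      rw [hD, e1]
      have : K * K' * ((k : ℝ) + 2) * ((k : ℝ) + 2) ^ (1 + δ)
          ≤ ((k : ℝ) + 2) * ((k : ℝ) + 2) * ((k : ℝ) + 2) ^ (1 + δ) := by
        have := mul_le_mul_of_nonneg_right
          (mul_le_mul_of_nonneg_right hKKk hk2.le) hrp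
        linarith
      exact mul_le_mul_of_nonneg_right this hE.le
    -- (k+2)^(4+δ) ≤ exp(r pn k)
    have h2 : ((k : ℝ) + 2) ^ ((4 : ℝ) + δ) ≤ Real.exp (r * (pn k : ℝ)) := by
      rw [Real.rpow_def_of_pos hk2, Real.exp_le_exp, mul_comm]
      exact hkeyk
    -- hence (k+2)^(3+δ) * exp(-(r pn k)) ≤ (k+2)⁻¹
    have h3 : ((k : ℝ) + 2) ^ ((3 : ℝ) + δ) * Real.exp (-(r * (pn k : ℝ)))
        ≤ ((k : ℝ) + 2)⁻¹ := by
      have e2 : ((k : ℝ) + 2) ^ ((3 : ℝ) + δ)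
          = ((k : ℝ) + 2) ^ ((4 : ℝ) + δ) * ((k : ℝ) + 2)⁻¹ := by
        rw [show (3 : ℝ) + δ = ((4 : ℝ) + δ) + (-1 : ℝ) by ring, Real.rpow_add hk2,
          Real.rpow_neg_one]
      have h4 : ((k : ℝ) + 2) ^ ((4 : ℝ) + δ) * Real.exp (-(r * (pn k : ℝ))) ≤ 1 := by
        calc ((k : ℝ) + 2) ^ ((4 : ℝ) + δ) * Real.exp (-(r * (pn k : ℝ)))
            ≤ Real.exp (r * (pn k : ℝ)) * Real.exp (-(r * (pn k : ℝ))) :=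
              mul_le_mul_of_nonneg_right h2 hE.le
          _ = 1 := by rw [← Real.exp_add]; simp
      calc ((k : ℝ) + 2) ^ ((3 : ℝ) + δ) * Real.exp (-(r * (pn k : ℝ)))
          = ((k : ℝ) + 2) ^ ((4 : ℝ) + δ) * Real.exp (-(r * (pn k : ℝ))) * ((k : ℝ) + 2)⁻¹ := by
            rw [e2]; ring
        _ ≤ 1 * ((k : ℝ) + 2)⁻¹ := mul_le_mul_of_nonneg_right h4 (by positivity)
        _ = ((k : ℝ) + 2)⁻¹ := one_mul _
    have h5 : ((k : ℝ) + 2)⁻¹ ≤ 1 / ((k : ℝ) + 1) := by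
      rw [one_div]
      exact inv_anti₀ (by positivity) (by linarith)
    exact le_trans h1 (le_trans h3 h5)
  -- Step 3: summability
  have hg : Summable (fun k : ℕ => (1 / ((k : ℝ) + 1)) ^ 2) := by
    have h := (Real.summable_one_div_nat_pow (p := 2)).2 one_lt_two
    have h2 := (summable_nat_add_iff 1).2 h
    refine h2.congr fun n => ?_
    push_cast
    rw [div_pow, one_pow]
  have hsum : Summable (fun k : ℕ => (δk k) ^ 2) := by
    apply Summable.of_norm_bounded_eventually_nat (g := fun k => (1 / ((k : ℝ) + 1)) ^ 2) hg
    filter_upwards [hev] with k hk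
    rw [Real.norm_eq_abs, abs_of_nonneg (sq_nonneg _)]
    calc (δk k) ^ 2 = |δk k| ^ 2 := (sq_abs _).symm
      _ ≤ D k ^ 2 := pow_le_pow_left₀ (abs_nonneg _) (hbound k) 2
      _ ≤ (1 / ((k : ℝ) + 1)) ^ 2 := pow_le_pow_left₀ (hDnonneg k) hk 2
  refine ⟨hsum, ∑' k, (δk k) ^ 2, fun n => ?_⟩
  exact Summable.sum_le_tsum _ (fun i _ => sq_nonneg _) hsum
end
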